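/- arXiv:1603.07002 — 5 statements merged into one kernel-verified Lean document; each statement's English description precedes it below -/
import Mathlib

section
/- Let A be a C*-algebra and let u, v ∈ A be partial isometries. Then ‖u*u − v*v‖ ≤ ‖u − v‖. -/
section aux2
variable {B : Type*} [NormedRing B] [StarRing B] [CStarRing B]

lemma aux_proj_norm_le_one {p : B} (h1 : p * p = p) (h2 : star p = p) : ‖p‖ ≤ 1 := by
  have h : ‖p‖ * ‖p‖ = ‖p‖ := by
    conv_rhs => rw [← h1]
    rw [← CStarRing.norm_star_mul_self (x := p), h2]
  nlinarith [norm_nonneg p]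


variable {B : Type*} [NormedRing B] [StarRing B] [CStarRing B]

lemma aux_pow_le (n : ℕ) : ∀ (a b : B), IsSelfAdjoint a → IsSelfAdjoint b → a * b = 0 →
    ‖a + b‖₊ ^ 2 ^ n ≤ ‖a‖₊ ^ 2 ^ n + ‖b‖₊ ^ 2 ^ n := by
  induction n with
  | zero => intro a b _ _ _; simpa using nnnorm_add_le a b
  | succ n ih =>
    intro a b ha hb hab
    have hba : b * a = 0 := by
      have := congrArg star hab
      rwa [star_mul, ha.star_eq, hb.star_eq, star_zero] at this
    have hsq : (a + b) ^ 2 = a ^ 2 + b ^ 2 := by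
      rw [sq, add_mul, mul_add, mul_add, hab, hba, sq, sq]
      abel
    have h2 : a ^ 2 * b ^ 2 = 0 := by
      rw [sq, sq, mul_assoc, ← mul_assoc a b, hab, zero_mul, mul_zero]
    have hab_sa : IsSelfAdjoint (a + b) := ha.add hb
    calc ‖a + b‖₊ ^ 2 ^ (n + 1) = (‖a + b‖₊ ^ 2) ^ 2 ^ n := by
          rw [← pow_mul, pow_succ, mul_comm]
      _ = ‖(a + b) ^ 2‖₊ ^ 2 ^ n := by
          rw [sq, ← CStarRing.nnnorm_star_mul_self (x := a + b), hab_sa.star_eq, sq]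
      _ = ‖a ^ 2 + b ^ 2‖₊ ^ 2 ^ n := by rw [hsq]
      _ ≤ ‖a ^ 2‖₊ ^ 2 ^ n + ‖b ^ 2‖₊ ^ 2 ^ n := ih _ _ (ha.pow 2) (hb.pow 2) h2
      _ = (‖a‖₊ ^ 2) ^ 2 ^ n + (‖b‖₊ ^ 2) ^ 2 ^ n := by
          rw [show a ^ 2 = star a * a by rw [ha.star_eq, sq],
            show b ^ 2 = star b * b by rw [hb.star_eq, sq],
            CStarRing.nnnorm_star_mul_self, CStarRing.nnnorm_star_mul_self, sq, sq]
      _ = ‖a‖₊ ^ 2 ^ (n + 1) + ‖b‖₊ ^ 2 ^ (n + 1) := by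
          rw [← pow_mul, ← pow_mul, ← pow_succ']

lemma aux_norm_add_le_max {a b : B} (ha : IsSelfAdjoint a) (hb : IsSelfAdjoint b)
    (hab : a * b = 0) : ‖a + b‖ ≤ max ‖a‖ ‖b‖ := by
  set M : ℝ := max ‖a‖ ‖b‖ with hM
  have hM0 : 0 ≤ M := le_max_of_le_left (norm_nonneg a)
  have key : ∀ n : ℕ, ‖a + b‖ ^ 2 ^ n ≤ 2 * M ^ 2 ^ n := by
    intro n
    have := aux_pow_le n a b ha hb hab
    have h' : ‖a + b‖ ^ 2 ^ n ≤ ‖a‖ ^ 2 ^ n + ‖b‖ ^ 2 ^ n := by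
      exact_mod_cast this
    calc ‖a + b‖ ^ 2 ^ n ≤ ‖a‖ ^ 2 ^ n + ‖b‖ ^ 2 ^ n := h'
      _ ≤ M ^ 2 ^ n + M ^ 2 ^ n := by
          gcongr <;> [exact le_max_left _ _; exact le_max_right _ _]
      _ = 2 * M ^ 2 ^ n := by ring
  have hbound : ∀ n : ℕ, ‖a + b‖ ≤ 2 ^ ((1:ℝ) / 2 ^ n) * M := by
    intro n
    have h2 : ((2:ℝ) ^ ((1:ℝ) / 2 ^ n)) ^ (2 ^ n : ℕ) = 2 := by
      rw [← Real.rpow_natCast ((2:ℝ) ^ ((1:ℝ)/2^n)) (2^n), ← Real.rpow_mul (by norm_num)]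
      push_cast
      rw [one_div, inv_mul_cancel₀ (by positivity), Real.rpow_one]
    have hpos : (0:ℝ) ≤ 2 ^ ((1:ℝ) / 2 ^ n) := Real.rpow_nonneg (by norm_num) _
    have : ‖a + b‖ ^ 2 ^ n ≤ (2 ^ ((1:ℝ) / 2 ^ n) * M) ^ 2 ^ n := by
      rw [mul_pow, h2]; exact key n
    exact le_of_pow_le_pow_left₀ (by positivity) (by positivity) this
  have hlim : Filter.Tendsto (fun n : ℕ => (2:ℝ) ^ ((1:ℝ) / 2 ^ n) * M) Filter.atTop
      (nhds M) := by
    have h1 : Filter.Tendsto (fun n : ℕ => (1:ℝ) / 2 ^ n) Filter.atTop (nhds 0) := by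
      have := tendsto_pow_atTop_nhds_zero_of_lt_one (by norm_num : (0:ℝ) ≤ 1/2)
        (by norm_num : (1:ℝ)/2 < 1)
      exact this.congr (fun n => by rw [div_pow, one_pow])
    have h2 : Filter.Tendsto (fun n : ℕ => (2:ℝ) ^ ((1:ℝ) / 2 ^ n)) Filter.atTop
        (nhds 1) := by
      have hc : ContinuousAt (fun y : ℝ => (2:ℝ) ^ y) 0 :=
        Real.continuousAt_const_rpow (by norm_num)
      simpa [Real.rpow_zero, Function.comp_def] using hc.tendsto.comp h1
    simpa using h2.mul_const M
  exact ge_of_tendsto' hlim hbound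


lemma aux_conj_selfAdjoint {B : Type*} [Ring B] [StarRing B] {p x : B}
    (hp : star p = p) (hx : star x = x) : IsSelfAdjoint (p * x * p) := by
  rw [IsSelfAdjoint, star_mul, star_mul, hp, hx, mul_assoc]

lemma aux_conj_eq {B : Type*} [Ring B] [StarRing B] {p x : B}
    (hp : star p = p) (hx : star x = x) (hxx : x * x = x) :
    star (x * p) * (x * p) = p * x * p := by
  rw [star_mul, hp, hx]
  calc p * x * (x * p) = p * (x * x) * p := by noncomm_ring
    _ = p * x * p := by rw [hxx]

lemma aux_norm_swap {B : Type*} [NormedRing B] [StarRing B] [NormedStarGroup B] {p x : B}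
    (hp : star p = p) (hx : star x = x) : ‖p * x‖ = ‖x * p‖ := by
  rw [← norm_star, star_mul, hp, hx]

lemma aux_norm_sq {B : Type*} [NormedRing B] [StarRing B] [CStarRing B] {x : B}
    (hx : star x = x) : ‖x ^ 2‖ = ‖x‖ ^ 2 := by
  rw [sq]
  nth_rewrite 1 [← hx]
  rw [CStarRing.norm_star_mul_self, sq]

end aux2


/-- An element `u` of a C*-algebra is a partial isometry if `u * u* * u = u`. -/
def IsPartialIsometry {A : Type*} [NonUnitalCStarAlgebra A] (u : A) : Prop :=
  u * star u * u = u

/-- If `u` and `v` are partial isometries in a C*-algebra, then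
`‖u*u − v*v‖ ≤ ‖u − v‖`. -/
theorem norm_star_mul_self_sub_le_of_partialIsometries
    {A : Type*} [NonUnitalCStarAlgebra A] (u v : A)
    (hu : IsPartialIsometry u) (hv : IsPartialIsometry v) :
    ‖star u * u - star v * v‖ ≤ ‖u - v‖ := by
  replace hu : u * star u * u = u := hu
  replace hv : v * star v * v = v := hv
  let B := Unitization ℂ A
  set U : B := (u : B) with hU
  set V : B := (v : B) with hV
  have hu' : U * star U * U = U := by
    rw [hU, ← Unitization.inr_star, ← Unitization.inr_mul, ← Unitization.inr_mul, hu]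
  have hv' : V * star V * V = V := by
    rw [hV, ← Unitization.inr_star, ← Unitization.inr_mul, ← Unitization.inr_mul, hv]
  set P : B := star U * U with hPdef
  set Q : B := star V * V with hQdef
  have hP : P * P = P := by
    rw [hPdef]
    calc star U * U * (star U * U) = star U * (U * star U * U) := by noncomm_ring
      _ = star U * U := by rw [hu']
  have hQ : Q * Q = Q := by
    rw [hQdef]
    calc star V * V * (star V * V) = star V * (V * star V * V) := by noncomm_ring
      _ = star V * V := by rw [hv']
  have hPs : star P = P := by rw [hPdef, star_mul, star_star]
  have hQs : star Q = Q := by rw [hQdef, star_mul, star_star]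
  -- norm bounds
  have hPn : ‖P‖ ≤ 1 := aux_proj_norm_le_one hP hPs
  have hQn : ‖Q‖ ≤ 1 := aux_proj_norm_le_one hQ hQs
  have hUn : ‖U‖ ≤ 1 := by
    have : ‖U‖ * ‖U‖ ≤ 1 := by
      rw [← CStarRing.norm_star_mul_self (x := U)]; exact hPn
    nlinarith [norm_nonneg U]
  have hVn : ‖V‖ ≤ 1 := by
    have : ‖V‖ * ‖V‖ ≤ 1 := by
      rw [← CStarRing.norm_star_mul_self (x := V)]; exact hQn
    nlinarith [norm_nonneg V]
  have h1Q : (1 - Q) * (1 - Q) = 1 - Q := by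
    simp only [mul_sub, sub_mul, hQ, one_mul, mul_one]; abel
  have h1P : (1 - P) * (1 - P) = 1 - P := by
    simp only [mul_sub, sub_mul, hP, one_mul, mul_one]; abel
  have h1Qs : star (1 - Q) = 1 - Q := by rw [star_sub, star_one, hQs]
  have h1Ps : star (1 - P) = 1 - P := by rw [star_sub, star_one, hPs]
  have h1Qn : ‖(1 : B) - Q‖ ≤ 1 := aux_proj_norm_le_one h1Q h1Qs
  have h1Pn : ‖(1 : B) - P‖ ≤ 1 := aux_proj_norm_le_one h1P h1Ps
  -- key cancellations: (1-Q) * star V = 0 and (1-P) * star U = 0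
  have hQV : (1 - Q) * star V = 0 := by
    rw [sub_mul, one_mul, hQdef]
    have : star V * V * star V = star V := by
      conv_rhs => rw [← hv']
      rw [star_mul, star_mul, star_star]
      noncomm_ring
    rw [this, sub_self]
  have hPU : (1 - P) * star U = 0 := by
    rw [sub_mul, one_mul, hPdef]
    have : star U * U * star U = star U := by
      conv_rhs => rw [← hu']
      rw [star_mul, star_mul, star_star]
      noncomm_ring
    rw [this, sub_self]
  -- c = (1-Q) * P, d = (1-P) * Q
  have hcb : ‖(1 - Q) * P‖ ≤ ‖U - V‖ := by
    have heq : (1 - Q) * star (U - V) * U = (1 - Q) * P := by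
      rw [star_sub, mul_sub, hQV, sub_zero, mul_assoc, ← hPdef]
    rw [← heq]
    calc ‖(1 - Q) * star (U - V) * U‖ ≤ ‖(1 - Q) * star (U - V)‖ * ‖U‖ := norm_mul_le _ _
      _ ≤ ‖(1:B) - Q‖ * ‖star (U - V)‖ * ‖U‖ := by
          gcongr; exact norm_mul_le _ _
      _ ≤ 1 * ‖star (U - V)‖ * 1 := by gcongr
      _ = ‖U - V‖ := by rw [norm_star, one_mul, mul_one]
  have hdb : ‖(1 - P) * Q‖ ≤ ‖U - V‖ := by
    have heq : (1 - P) * star (V - U) * V = (1 - P) * Q := by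
      rw [star_sub, mul_sub, hPU, sub_zero, mul_assoc, ← hQdef]
    rw [← heq]
    calc ‖(1 - P) * star (V - U) * V‖ ≤ ‖(1 - P) * star (V - U)‖ * ‖V‖ := norm_mul_le _ _
      _ ≤ ‖(1:B) - P‖ * ‖star (V - U)‖ * ‖V‖ := by
          gcongr; exact norm_mul_le _ _
      _ ≤ 1 * ‖star (V - U)‖ * 1 := by gcongr
      _ = ‖V - U‖ := by rw [norm_star, one_mul, mul_one]
      _ = ‖U - V‖ := norm_sub_rev _ _
  -- the two orthogonal pieces
  set a : B := P * (1 - Q) * P with hadef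
  set b : B := (1 - P) * Q * (1 - P) with hbdef
  have hkey : (P - Q) ^ 2 = a + b := by
    rw [hadef, hbdef]
    simp only [sq, mul_sub, sub_mul, one_mul, mul_one, hP, hQ]
    abel
  have has : IsSelfAdjoint a := hadef ▸ aux_conj_selfAdjoint hPs h1Qs
  have hbs : IsSelfAdjoint b := hbdef ▸ aux_conj_selfAdjoint h1Ps hQs
  have hP0 : P * (1 - P) = 0 := by rw [mul_sub, hP, mul_one, sub_self]
  have hab0 : a * b = 0 := by
    have : a * b = P * (1 - Q) * (P * (1 - P)) * (Q * (1 - P)) := by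
      rw [hadef, hbdef]; noncomm_ring
    rw [this, hP0, mul_zero, zero_mul]
  have hna : ‖a‖ ≤ ‖U - V‖ ^ 2 := by
    have hc : star ((1 - Q) * P) * ((1 - Q) * P) = a := hadef ▸ aux_conj_eq hPs h1Qs h1Q
    calc ‖a‖ = ‖(1 - Q) * P‖ * ‖(1 - Q) * P‖ := by
          rw [← hc, CStarRing.norm_star_mul_self]
      _ ≤ ‖U - V‖ * ‖U - V‖ := by gcongr
      _ = ‖U - V‖ ^ 2 := (sq _).symm
  have hnb : ‖b‖ ≤ ‖U - V‖ ^ 2 := by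
    have hc : star (Q * (1 - P)) * (Q * (1 - P)) = b := hbdef ▸ aux_conj_eq h1Ps hQs hQ
    have hd : ‖Q * (1 - P)‖ = ‖(1 - P) * Q‖ := aux_norm_swap hQs h1Ps
    calc ‖b‖ = ‖Q * (1 - P)‖ * ‖Q * (1 - P)‖ := by
          rw [← hc, CStarRing.norm_star_mul_self]
      _ = ‖(1 - P) * Q‖ * ‖(1 - P) * Q‖ := by rw [hd]
      _ ≤ ‖U - V‖ * ‖U - V‖ := by gcongr
      _ = ‖U - V‖ ^ 2 := (sq _).symm
  have hPQs : IsSelfAdjoint (P - Q) := by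
    rw [IsSelfAdjoint, star_sub, hPs, hQs]
  have hfin : ‖P - Q‖ ^ 2 ≤ ‖U - V‖ ^ 2 := by
    calc ‖P - Q‖ ^ 2 = ‖(P - Q) ^ 2‖ := (aux_norm_sq hPQs.star_eq).symm
      _ = ‖a + b‖ := by rw [hkey]
      _ ≤ max ‖a‖ ‖b‖ := aux_norm_add_le_max has hbs hab0
      _ ≤ ‖U - V‖ ^ 2 := max_le hna hnb
  have hPQ : ‖P - Q‖ ≤ ‖U - V‖ :=
    le_of_pow_le_pow_left₀ two_ne_zero (norm_nonneg _) hfin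
  have hcast1 : ‖star u * u - star v * v‖ = ‖P - Q‖ := by
    rw [← Unitization.norm_inr (𝕜 := ℂ) (star u * u - star v * v),
      Unitization.inr_sub, Unitization.inr_mul, Unitization.inr_mul,
      Unitization.inr_star, Unitization.inr_star, ← hU, ← hV, ← hPdef, ← hQdef]
  have hcast2 : ‖U - V‖ = ‖u - v‖ := by
    rw [hU, hV, ← Unitization.inr_sub, Unitization.norm_inr]
  rw [hcast1, ← hcast2]
  exact hPQ
end

section
/- Let X be a topological space, A a C*-algebra, and f : X → A a continuous function such that f(x) has closed range for every x ∈ X. Let u(x) = 𝐮(f(x)) and fix x₀ ∈ X. Then the following are equivalent: (i) u is continuous at x₀; (ii) the function x ↦ u(x)*u(x) is continuous at x₀; (iii) there exist ε > 0 and a neighborhood V of x₀ such that for every x ∈ V the spectrum of |f(x)| omits the interval (0, ε). -/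
open scoped NNReal

variable {A : Type*} [NonUnitalCStarAlgebra A]

/-- The absolute value `|a| = (a*a)^{1/2}` of an element of a C*-algebra. -/
noncomputable def cstarAbs (a : A) : A := cfcₙ Real.sqrt (star a * a)

/-- An element `a` of a C*-algebra has closed range if the spectrum of `|a|`
omits an interval `(0, ε)` for some `ε > 0`. -/
def HasClosedRange (a : A) : Prop :=
  ∃ ε > 0, ∀ x ∈ quasispectrum ℝ (cstarAbs a), x ∉ Set.Ioo 0 ε

/-- A choice of `ε > 0` witnessing that the spectrum of `|a|` omits `(0, ε)`
(junk value `1` if `a` does not have closed range). -/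
noncomputable def crEps (a : A) : ℝ :=
  open Classical in if h : HasClosedRange a then h.choose else 1

/-- The partial isometry `𝐮 a` in the canonical polar decomposition of a closed
range element `a`, given by the explicit formula `𝐮 a = a * h (|a|)` where `h`
is a continuous function with `h 0 = 0` and `h t = t⁻¹` for `t ≥ ε`
(junk values when `a` does not have closed range). -/
noncomputable def polarIso (a : A) : A :=
  a * cfcₙ (fun t : ℝ => t * ((max t (crEps a))⁻¹) ^ 2) (cstarAbs a)

section Auxiliary

open Filter Polynomial Topology

/-- Continuity (along a filter) of the unital continuous functional calculus in the
element, for a fixed continuous function, on selfadjoint elements. -/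
lemma tendsto_cfc_of_tendsto_aux {X : Type*} {B : Type*} [CStarAlgebra B] [Nontrivial B]
    {l : Filter X}
    {g : X → B} {b : B} (hg : ∀ x, IsSelfAdjoint (g x)) (hb : IsSelfAdjoint b)
    (hgb : Tendsto g l (𝓝 b)) {G : ℝ → ℝ} (hG : Continuous G) :
    Tendsto (fun x => cfc G (g x)) l (𝓝 (cfc G b)) := by
  rw [Metric.tendsto_nhds]
  intro ε hε
  set M : ℝ := ‖b‖ + 1 with hM
  have hM0 : (0:ℝ) < M := by positivity
  obtain ⟨p, hp⟩ := exists_polynomial_near_of_continuousOn (-M) M G hG.continuousOn (ε/4)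
    (by linarith)
  have key : ∀ c : B, IsSelfAdjoint c → ‖c‖ ≤ M → ‖cfc G c - aeval c p‖ ≤ ε/4 := by
    intro c hc hcM
    rw [← cfc_polynomial p c, ← cfc_sub G p.eval c hG.continuousOn p.continuous.continuousOn]
    refine norm_cfc_le (by linarith) fun t ht => ?_
    have h1 : |t| ≤ M := by
      have := spectrum.norm_le_norm_of_mem ht
      rw [Real.norm_eq_abs] at this
      exact this.trans hcM
    have h2 := hp t ⟨neg_le_of_abs_le h1, le_of_abs_le h1⟩
    rw [Real.norm_eq_abs, abs_sub_comm]
    linarith [abs_nonneg (p.eval t - G t)]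
  have h1 : ∀ᶠ x in l, ‖g x‖ ≤ M :=
    hgb.norm.eventually (eventually_le_nhds (by linarith : ‖b‖ < M))
  have h2 : ∀ᶠ x in l, dist (aeval (g x) p) (aeval b p) < ε/4 :=
    (Metric.tendsto_nhds.mp ((p.continuous_aeval.tendsto _).comp hgb)) _ (by linarith)
  filter_upwards [h1, h2] with x hx1 hx2
  have k1 := key (g x) (hg x) hx1
  have k2 := key b hb (by linarith)
  calc dist (cfc G (g x)) (cfc G b)
      ≤ dist (cfc G (g x)) (aeval (g x) p) + dist (aeval (g x) p) (aeval b p)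
        + dist (aeval b p) (cfc G b) := dist_triangle4 _ _ _ _
    _ < ε := by
        simp only [dist_eq_norm] at hx2 ⊢
        rw [norm_sub_rev ((aeval b) p) (cfc G b)]
        linarith

/-- Continuity (along a filter) of the non-unital continuous functional calculus in the
element, for a fixed continuous function vanishing at zero, on selfadjoint elements. -/
lemma tendsto_cfcₙ_of_tendsto_aux {X : Type*} {A : Type*} [NonUnitalCStarAlgebra A]
    {l : Filter X} {g : X → A} {b : A} (hg : ∀ x, IsSelfAdjoint (g x))
    (hb : IsSelfAdjoint b) (hgb : Tendsto g l (𝓝 b)) {G : ℝ → ℝ} (hG : Continuous G)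
    (hG0 : G 0 = 0) :
    Tendsto (fun x => cfcₙ G (g x)) l (𝓝 (cfcₙ G b)) := by
  have hiso : Isometry ((↑) : A → Unitization ℂ A) := Unitization.isometry_inr
  rw [hiso.isEmbedding.tendsto_nhds_iff]
  have h1 : ∀ a : A, ((cfcₙ G a : A) : Unitization ℂ A) = cfc G (a : Unitization ℂ A) :=
    fun a => Unitization.real_cfcₙ_eq_cfc_inr a G hG0
  have h2 : (((↑) : A → Unitization ℂ A) ∘ fun x => cfcₙ G (g x))
      = fun x => cfc G ((g x : Unitization ℂ A)) := funext fun x => h1 (g x)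
  rw [h2, h1 b]
  exact tendsto_cfc_of_tendsto_aux (fun x => (Unitization.isSelfAdjoint_inr (R := ℂ)).mpr (hg x))
    ((Unitization.isSelfAdjoint_inr (R := ℂ)).mpr hb)
    ((hiso.continuous.tendsto b).comp hgb) hG

end Auxiliary


section CStarLayer

open Filter Topology

variable {A : Type*} [NonUnitalCStarAlgebra A]

lemma isSelfAdjoint_star_mul_self'' (a : A) : IsSelfAdjoint (star a * a) :=
  IsSelfAdjoint.star_mul_self a

lemma quasi_nonneg' (a : A) {s : ℝ} (hs : s ∈ quasispectrum ℝ (star a * a)) : 0 ≤ s := by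
  rw [Unitization.quasispectrum_eq_spectrum_inr' ℝ ℂ (star a * a)] at hs
  rw [show ((star a * a : A) : Unitization ℂ A)
      = star (a : Unitization ℂ A) * (a : Unitization ℂ A) by
        rw [Unitization.inr_mul, Unitization.inr_star]] at hs
  exact spectrum_star_mul_self_nonneg s hs

lemma cstarAbs_cfcₙ_eq (a : A) {g : ℝ → ℝ} (hg : Continuous g) (hg0 : g 0 = 0) :
    cfcₙ g (cstarAbs a) = cfcₙ (fun s => g (Real.sqrt s)) (star a * a) := by
  rw [cstarAbs]
  exact (cfcₙ_comp' g Real.sqrt (star a * a) hg.continuousOn hg0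
    Real.continuous_sqrt.continuousOn Real.sqrt_zero
    (isSelfAdjoint_star_mul_self'' a)).symm

lemma quasi_cstarAbs (a : A) :
    quasispectrum ℝ (cstarAbs a) = Real.sqrt '' quasispectrum ℝ (star a * a) := by
  rw [cstarAbs]
  exact cfcₙ_map_quasispectrum Real.sqrt (star a * a)
    Real.continuous_sqrt.continuousOn Real.sqrt_zero (isSelfAdjoint_star_mul_self'' a)

lemma crEps_pos {a : A} (h : HasClosedRange a) : 0 < crEps a := by
  rw [crEps, dif_pos h]
  exact h.choose_spec.1

lemma crEps_spec {a : A} (h : HasClosedRange a) :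
    ∀ t ∈ quasispectrum ℝ (cstarAbs a), t ∉ Set.Ioo 0 (crEps a) := by
  rw [crEps, dif_pos h]
  exact h.choose_spec.2

lemma gap_cases (a : A) {ε : ℝ}
    (hgap : ∀ t ∈ quasispectrum ℝ (cstarAbs a), t ∉ Set.Ioo 0 ε)
    {t : ℝ} (ht : t ∈ quasispectrum ℝ (cstarAbs a)) : t = 0 ∨ ε ≤ t := by
  have htnn : 0 ≤ t := by
    rw [quasi_cstarAbs] at ht
    obtain ⟨s, _, rfl⟩ := ht
    exact Real.sqrt_nonneg s
  rcases eq_or_lt_of_le htnn with h | h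
  · exact Or.inl h.symm
  · exact Or.inr (le_of_not_gt fun hlt => hgap t ht ⟨h, hlt⟩)

/-- The fixed auxiliary function appearing in the polar decomposition formula,
precomposed with the square root. -/
noncomputable def Gfun (ε s : ℝ) : ℝ := Real.sqrt s * ((max (Real.sqrt s) ε)⁻¹) ^ 2

lemma Gfun_cont {ε : ℝ} (hε : 0 < ε) : Continuous (Gfun ε) :=
  Real.continuous_sqrt.mul (((Real.continuous_sqrt.max continuous_const).inv₀
    fun s => (lt_of_lt_of_le hε (le_max_right _ _)).ne').pow 2)

lemma Gfun_zero (ε : ℝ) : Gfun ε 0 = 0 := by simp [Gfun]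

lemma Gfun_eval {ε t : ℝ} (hε : 0 < ε) (hεt : ε ≤ t) : Gfun ε (t ^ 2) = t⁻¹ := by
  have ht : 0 < t := hε.trans_le hεt
  rw [Gfun, Real.sqrt_sq ht.le, max_eq_left hεt]
  field_simp

/-- The function whose functional calculus computes `u* u`. -/
noncomputable def Pfun (ε s : ℝ) : ℝ := Gfun ε s * (s * Gfun ε s)

lemma Pfun_cont {ε : ℝ} (hε : 0 < ε) : Continuous (Pfun ε) :=
  (Gfun_cont hε).mul (continuous_id.mul (Gfun_cont hε))

lemma Pfun_zero (ε : ℝ) : Pfun ε 0 = 0 := by simp [Pfun, Gfun_zero]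

lemma Pfun_eval {ε t : ℝ} (hε : 0 < ε) (hεt : ε ≤ t) : Pfun ε (t ^ 2) = 1 := by
  have ht : t ≠ 0 := (hε.trans_le hεt).ne'
  rw [Pfun, Gfun_eval hε hεt]
  field_simp

lemma polarIso_eq (a : A) (h : HasClosedRange a) {ε : ℝ} (hε : 0 < ε)
    (hgap : ∀ t ∈ quasispectrum ℝ (cstarAbs a), t ∉ Set.Ioo 0 ε) :
    polarIso a = a * cfcₙ (Gfun ε) (star a * a) := by
  rw [polarIso]
  congr 1
  have h1 : cfcₙ (fun t : ℝ => t * ((max t (crEps a))⁻¹) ^ 2) (cstarAbs a)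
      = cfcₙ (fun t : ℝ => t * ((max t ε)⁻¹) ^ 2) (cstarAbs a) := by
    apply cfcₙ_congr
    intro t ht
    rcases gap_cases a hgap ht with h0 | h1'
    · simp [h0]
    · rcases gap_cases a (crEps_spec h) ht with h0 | h2'
      · simp [h0]
      · simp only [max_eq_left h1', max_eq_left h2']
  rw [h1, cstarAbs_cfcₙ_eq a (g := fun t : ℝ => t * ((max t ε)⁻¹) ^ 2)]
  · rfl
  · exact continuous_id.mul (((continuous_id.max continuous_const).inv₀
      fun s => (lt_of_lt_of_le hε (le_max_right _ _)).ne').pow 2)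
  · simp

lemma star_polarIso_mul (a : A) (h : HasClosedRange a) {ε : ℝ} (hε : 0 < ε)
    (hgap : ∀ t ∈ quasispectrum ℝ (cstarAbs a), t ∉ Set.Ioo 0 ε) :
    star (polarIso a) * polarIso a = cfcₙ (Pfun ε) (star a * a) := by
  rw [polarIso_eq a h hε hgap]
  set b : A := star a * a with hbdef
  set c : A := cfcₙ (Gfun ε) b with hcdef
  have hsa : IsSelfAdjoint b := isSelfAdjoint_star_mul_self'' a
  have hc : IsSelfAdjoint c := cfcₙ_predicate _ _
  have key : star (a * c) * (a * c) = c * (b * c) := by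
    rw [star_mul, hc.star_eq, hbdef]
    simp only [mul_assoc]
  rw [key]
  have e2 : cfcₙ (fun s : ℝ => s * Gfun ε s) b = b * c := by
    rw [cfcₙ_mul (fun s : ℝ => s) (Gfun ε) b continuous_id.continuousOn rfl
      (Gfun_cont hε).continuousOn (Gfun_zero ε), cfcₙ_id' ℝ b]
  have e1 : cfcₙ (Pfun ε) b = c * cfcₙ (fun s : ℝ => s * Gfun ε s) b :=
    cfcₙ_mul (Gfun ε) (fun s : ℝ => s * Gfun ε s) b (Gfun_cont hε).continuousOn (Gfun_zero ε)
      (continuous_id.mul (Gfun_cont hε)).continuousOn (by simp [Gfun_zero])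
  rw [e1, e2]

end CStarLayer

/-- **Proposition 2.** Let `f : X → A` be a continuous function from a topological
space into a C*-algebra such that `f x` has closed range for each `x`, let
`u x = 𝐮 (f x)`, and let `x₀ ∈ X`.  Then the following are equivalent:
(i) `u` is continuous at `x₀`;
(ii) `x ↦ u(x)* u(x)` is continuous at `x₀`;
(iii) there are `ε > 0` and a neighborhood `V` of `x₀` such that the spectrum of
`|f x|` omits `(0, ε)` for every `x ∈ V`. -/
theorem polarIso_continuousAt_tfae
    {X : Type*} [TopologicalSpace X] {A : Type*} [NonUnitalCStarAlgebra A]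
    (f : X → A) (hf : Continuous f) (hcr : ∀ x, HasClosedRange (f x))
    (u : X → A) (hu : ∀ x, u x = polarIso (f x)) (x₀ : X) :
    List.TFAE
      [ ContinuousAt u x₀,
        ContinuousAt (fun x => star (u x) * u x) x₀,
        ∃ ε > 0, ∃ V ∈ nhds x₀, ∀ x ∈ V,
          ∀ s ∈ quasispectrum ℝ (cstarAbs (f x)), s ∉ Set.Ioo 0 ε ] := by
  have hbsa : ∀ x : X, IsSelfAdjoint (star (f x) * f x) :=
    fun x => isSelfAdjoint_star_mul_self'' (f x)
  have hbc : Continuous fun x => star (f x) * f x := (hf.star).mul hf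
  tfae_have 1 → 2 := fun h => (h.star).mul h
  tfae_have 3 → 1 := by
    rintro ⟨ε, hε, V, hV, hgap⟩
    have heq : ∀ᶠ x in nhds x₀,
        (fun x => f x * cfcₙ (Gfun ε) (star (f x) * f x)) x = u x := by
      filter_upwards [hV] with x hx
      rw [hu x, polarIso_eq (f x) (hcr x) hε (hgap x hx)]
    have hcont : ContinuousAt (fun x => f x * cfcₙ (Gfun ε) (star (f x) * f x)) x₀ :=
      hf.continuousAt.mul
        (tendsto_cfcₙ_of_tendsto_aux hbsa (hbsa x₀) hbc.continuousAt (Gfun_cont hε)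
          (Gfun_zero ε))
    exact hcont.congr heq
  tfae_have 2 → 3 := by
    intro h2
    set ε₀ := crEps (f x₀) with hε₀def
    have hε₀ : 0 < ε₀ := crEps_pos (hcr x₀)
    set K : ℝ → ℝ := fun s => min 1 (max (2 * Real.sqrt s / ε₀ - 1) 0) with hKdef
    have hKc : Continuous K :=
      continuous_const.min ((((continuous_const.mul Real.continuous_sqrt).div_const ε₀).sub
        continuous_const).max continuous_const)
    have hK0 : K 0 = 0 := by norm_num [hKdef]
    have hKbig : ∀ t : ℝ, ε₀ ≤ t → K (t ^ 2) = 1 := by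
      intro t ht
      have h0t : 0 ≤ t := hε₀.le.trans ht
      simp only [hKdef]
      rw [Real.sqrt_sq h0t]
      have h1 : (1:ℝ) ≤ 2 * t / ε₀ - 1 := by
        rw [le_sub_iff_add_le, le_div_iff₀ hε₀]
        linarith
      rw [max_eq_left (by linarith), min_eq_left h1]
    have hKsmall : ∀ t : ℝ, 0 ≤ t → t < ε₀ / 2 → K (t ^ 2) = 0 := by
      intro t h0t ht
      simp only [hKdef]
      rw [Real.sqrt_sq h0t]
      have h1 : 2 * t / ε₀ - 1 ≤ 0 := by
        rw [sub_nonpos, div_le_one hε₀]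
        linarith
      rw [max_eq_right h1, min_eq_right zero_le_one]
    have hq : ContinuousAt (fun x => cfcₙ K (star (f x) * f x)) x₀ :=
      tendsto_cfcₙ_of_tendsto_aux hbsa (hbsa x₀) hbc.continuousAt hKc hK0
    have claimA : star (u x₀) * u x₀ = cfcₙ K (star (f x₀) * f x₀) := by
      rw [hu x₀, star_polarIso_mul (f x₀) (hcr x₀) hε₀ (crEps_spec (hcr x₀))]
      apply cfcₙ_congr
      intro s hs
      have hsnn : 0 ≤ s := quasi_nonneg' (f x₀) hs
      have hts : Real.sqrt s ∈ quasispectrum ℝ (cstarAbs (f x₀)) := by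
        rw [quasi_cstarAbs]
        exact ⟨s, hs, rfl⟩
      rcases gap_cases (f x₀) (crEps_spec (hcr x₀)) hts with h0 | hge
      · have hs0 : s = 0 := le_antisymm (Real.sqrt_eq_zero'.mp h0) hsnn
        rw [hs0, Pfun_zero, hK0]
      · have hs2 : s = (Real.sqrt s) ^ 2 := (Real.sq_sqrt hsnn).symm
        rw [hs2, Pfun_eval hε₀ hge, hKbig _ hge]
    have h0 : Filter.Tendsto (fun x => star (u x) * u x - cfcₙ K (star (f x) * f x))
        (nhds x₀) (nhds 0) := by
      have hh : Filter.Tendsto (fun x => star (u x) * u x - cfcₙ K (star (f x) * f x))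
          (nhds x₀) (nhds (star (u x₀) * u x₀ - cfcₙ K (star (f x₀) * f x₀))) := h2.sub hq
      rwa [claimA, sub_self] at hh
    have hev : ∀ᶠ x in nhds x₀,
        ‖star (u x) * u x - cfcₙ K (star (f x) * f x)‖ < 1/2 := by
      have hn := h0.norm
      rw [norm_zero] at hn
      exact hn.eventually (eventually_lt_nhds one_half_pos)
    refine ⟨ε₀ / 2, by positivity, _, hev, ?_⟩
    rintro x hx t ht ⟨ht0, htε⟩
    have hεx : 0 < crEps (f x) := crEps_pos (hcr x)
    have htx : crEps (f x) ≤ t := by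
      rcases gap_cases (f x) (crEps_spec (hcr x)) ht with h0' | h
      · exact absurd h0' ht0.ne'
      · exact h
    obtain ⟨s, hs, hst⟩ : t ∈ Real.sqrt '' quasispectrum ℝ (star (f x) * f x) := by
      rw [← quasi_cstarAbs]
      exact ht
    have hsnn : 0 ≤ s := quasi_nonneg' (f x) hs
    have hst2 : s = t ^ 2 := by rw [← hst, Real.sq_sqrt hsnn]
    have hdiff : star (u x) * u x - cfcₙ K (star (f x) * f x)
        = cfcₙ (fun s => Pfun (crEps (f x)) s - K s) (star (f x) * f x) := by
      rw [hu x, star_polarIso_mul (f x) (hcr x) hεx (crEps_spec (hcr x))]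
      exact (cfcₙ_sub (Pfun (crEps (f x))) K _ (Pfun_cont hεx).continuousOn
        (Pfun_zero _) hKc.continuousOn hK0).symm
    have h1le : (1:ℝ) ≤ ‖star (u x) * u x - cfcₙ K (star (f x) * f x)‖ := by
      rw [hdiff]
      have hb := norm_apply_le_norm_cfcₙ (fun s => Pfun (crEps (f x)) s - K s)
        (star (f x) * f x) hs (((Pfun_cont hεx).sub hKc).continuousOn)
        (by simp [Pfun_zero, hK0]) (hbsa x)
      simp only [hst2, Pfun_eval hεx htx, hKsmall t ht0.le htε] at hb
      simpa using hb
    have hx' : ‖star (u x) * u x - cfcₙ K (star (f x) * f x)‖ < 1/2 := hx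
    linarith
  tfae_finish
end

section
/- Let X be a topological space, A a C*-algebra, and f : X → A a continuous function such that f(x) has closed range for every x ∈ X, and let u(x) = 𝐮(f(x)). Then the set of points of X at which u is continuous is an open subset of X. -/
open scoped NNReal

variable {A : Type*} [NonUnitalCStarAlgebra A]

namespace PolarAux

open scoped CStarAlgebra

local notation "σₙ" => quasispectrum

/-! ### the functions `gFun` and `kFun` -/

noncomputable def gFun (ε t : ℝ) : ℝ := t * ((max t ε)⁻¹) ^ 2

noncomputable def kFun (ε t : ℝ) : ℝ := gFun ε t * (t * (t * gFun ε t))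

lemma continuous_gFun {ε : ℝ} (hε : 0 < ε) : Continuous (gFun ε) :=
  continuous_id.mul
    (((continuous_id.max continuous_const).inv₀
      fun t => (lt_of_lt_of_le hε (le_max_right t ε)).ne').pow 2)

lemma continuous_kFun {ε : ℝ} (hε : 0 < ε) : Continuous (kFun ε) :=
  (continuous_gFun hε).mul
    (continuous_id.mul (continuous_id.mul (continuous_gFun hε)))

@[simp] lemma gFun_zero (ε : ℝ) : gFun ε 0 = 0 := by simp [gFun]

@[simp] lemma kFun_zero (ε : ℝ) : kFun ε 0 = 0 := by simp [kFun]

lemma gFun_large {ε t : ℝ} (hε : 0 < ε) (h : ε ≤ t) : gFun ε t = t⁻¹ := by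
  have ht : t ≠ 0 := (hε.trans_le h).ne'
  rw [gFun, max_eq_left h, sq, ← mul_assoc, mul_inv_cancel₀ ht, one_mul]

lemma kFun_large {ε t : ℝ} (hε : 0 < ε) (h : ε ≤ t) : kFun ε t = 1 := by
  have ht : t ≠ 0 := (hε.trans_le h).ne'
  rw [kFun, gFun_large hε h]
  field_simp

/-! ### basic facts -/

section Basic

variable {A : Type*} [NonUnitalCStarAlgebra A]

lemma crEps_pos (a : A) : 0 < crEps a := by
  rw [crEps]
  split_ifs with h
  · exact h.choose_spec.1
  · norm_num

lemma crEps_spec {a : A} (h : HasClosedRange a) :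
    ∀ t ∈ σₙ ℝ (cstarAbs a), t ∉ Set.Ioo 0 (crEps a) := by
  rw [crEps, dif_pos h]
  exact h.choose_spec.2

lemma star_mul_self_sa (a : A) : IsSelfAdjoint (star a * a) := IsSelfAdjoint.star_mul_self a

lemma cstarAbs_sa (a : A) : IsSelfAdjoint (cstarAbs a) := cfcₙ_predicate Real.sqrt (star a * a)

lemma quasi_abs_nonneg {a : A} {t : ℝ} (ht : t ∈ σₙ ℝ (cstarAbs a)) : 0 ≤ t := by
  rw [cstarAbs, cfcₙ_map_quasispectrum Real.sqrt (star a * a) (by fun_prop) (by simp)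
    (star_mul_self_sa a)] at ht
  obtain ⟨s, -, rfl⟩ := ht
  exact Real.sqrt_nonneg s

lemma spec_dichotomy {a : A} (h : HasClosedRange a) {t : ℝ}
    (ht : t ∈ σₙ ℝ (cstarAbs a)) : t = 0 ∨ crEps a ≤ t := by
  rcases eq_or_lt_of_le (quasi_abs_nonneg ht) with h0 | hpos
  · exact Or.inl h0.symm
  · exact Or.inr <| le_of_not_gt fun hlt => crEps_spec h t ht ⟨hpos, hlt⟩

lemma cstarAbs_mul_self (a : A) : cstarAbs a * cstarAbs a = star a * a := by
  have hsa : IsSelfAdjoint (star a * a) := star_mul_self_sa a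
  have h2 : ∀ x ∈ σₙ ℝ (star a * a), 0 ≤ x := by
    intro x hx
    rw [Unitization.quasispectrum_eq_spectrum_inr' ℝ ℂ] at hx
    rw [show ((star a * a : A) : A⁺¹) = star (a : A⁺¹) * (a : A⁺¹) by
      rw [Unitization.inr_mul, Unitization.inr_star]] at hx
    exact spectrum_nonneg_of_nonneg (star_mul_self_nonneg _) hx
  rw [cstarAbs, ← cfcₙ_mul Real.sqrt Real.sqrt (star a * a) (by fun_prop) (by simp)
    (by fun_prop) (by simp)]
  calc cfcₙ (fun x => Real.sqrt x * Real.sqrt x) (star a * a)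
      = cfcₙ (id : ℝ → ℝ) (star a * a) := by
        apply cfcₙ_congr
        intro x hx
        exact Real.mul_self_sqrt (h2 x hx)
    _ = star a * a := cfcₙ_id ℝ _ hsa

lemma quasispectrum_abs_le_norm (b : A) {t : ℝ} (ht : t ∈ σₙ ℝ b) : |t| ≤ ‖b‖ := by
  rw [Unitization.quasispectrum_eq_spectrum_inr' ℝ ℂ b] at ht
  simpa [Unitization.norm_inr, Real.norm_eq_abs] using spectrum.norm_le_norm_of_mem ht

lemma polarIso_eq (a : A) : polarIso a = a * cfcₙ (gFun (crEps a)) (cstarAbs a) := rfl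

lemma cfcₙ_sq (a : A) : cfcₙ (fun t : ℝ => t * t) (cstarAbs a) = star a * a := by
  have hb : IsSelfAdjoint (cstarAbs a) := cstarAbs_sa a
  rw [cfcₙ_mul (fun t : ℝ => t) (fun t : ℝ => t) (cstarAbs a) (by fun_prop) rfl
    (by fun_prop) rfl, cfcₙ_id' ℝ _ hb, cstarAbs_mul_self]

lemma cfcₙ_mul_id_left (b : A) (hb : IsSelfAdjoint b) (f : ℝ → ℝ)
    (hf : ContinuousOn f (σₙ ℝ b)) (hf0 : f 0 = 0) :
    cfcₙ (fun t => t * f t) b = b * cfcₙ f b := by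
  rw [cfcₙ_mul (fun t : ℝ => t) f b (by fun_prop) rfl hf hf0, cfcₙ_id' ℝ b hb]

/-- `star u * u = cfcₙ (kFun ε) |a|` for `u = polarIso a`. -/
lemma polarIso_star_mul_self (a : A) :
    star (polarIso a) * polarIso a = cfcₙ (kFun (crEps a)) (cstarAbs a) := by
  set ε := crEps a
  have hε := crEps_pos a
  set b := cstarAbs a with hbdef
  have hb : IsSelfAdjoint b := cstarAbs_sa a
  have hg : Continuous (gFun ε) := continuous_gFun hε
  set c := cfcₙ (gFun ε) b with hcdef
  have hcsa : IsSelfAdjoint c := cfcₙ_predicate (gFun ε) b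
  have h1 : cfcₙ (kFun ε) b = c * (b * (b * c)) := by
    have e1 : cfcₙ (kFun ε) b = cfcₙ (gFun ε) b * cfcₙ (fun s => s * (s * gFun ε s)) b :=
      cfcₙ_mul (gFun ε) (fun s => s * (s * gFun ε s)) b hg.continuousOn (by simp)
        (continuous_id.mul (continuous_id.mul hg)).continuousOn (by simp)
    rw [e1, cfcₙ_mul_id_left b hb (fun s => s * gFun ε s)
      (continuous_id.mul hg).continuousOn (by simp),
      cfcₙ_mul_id_left b hb (gFun ε) hg.continuousOn (by simp)]
  have h2 : star (polarIso a) * polarIso a = c * ((star a * a) * c) := by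
    rw [polarIso_eq, ← hbdef, ← hcdef, star_mul, hcsa.star_eq]
    simp only [mul_assoc]
  rw [h2, h1, ← cstarAbs_mul_self a, ← hbdef]
  simp only [mul_assoc]

/-- `(star u * u) * cfcₙ φ |a| = cfcₙ φ |a|` for closed-range `a`. -/
lemma polarIso_conj_cfcₙ (a : A) (hcr : HasClosedRange a) {φ : ℝ → ℝ}
    (hφ : Continuous φ) (hφ0 : φ 0 = 0) :
    star (polarIso a) * polarIso a * cfcₙ φ (cstarAbs a) = cfcₙ φ (cstarAbs a) := by
  have hε := crEps_pos a
  rw [polarIso_star_mul_self,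
    ← cfcₙ_mul (kFun (crEps a)) φ (cstarAbs a) (continuous_kFun hε).continuousOn (by simp)
      hφ.continuousOn hφ0]
  apply cfcₙ_congr
  intro t ht
  rcases spec_dichotomy hcr ht with h0 | hge
  · simp [h0, hφ0]
  · simp [kFun_large hε hge]

lemma norm_polarIso_mul_cfcₙ (a : A) (hcr : HasClosedRange a) {φ : ℝ → ℝ}
    (hφ : Continuous φ) (hφ0 : φ 0 = 0) :
    ‖polarIso a * cfcₙ φ (cstarAbs a)‖ = ‖cfcₙ φ (cstarAbs a)‖ := by
  set w := polarIso a
  set c := cfcₙ φ (cstarAbs a)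
  have h1 : star (w * c) * (w * c) = star c * c := by
    rw [star_mul, show star c * star w * (w * c) = star c * (star w * w * c) by
      simp only [mul_assoc], polarIso_conj_cfcₙ a hcr hφ hφ0]
  have h2 : ‖w * c‖ * ‖w * c‖ = ‖c‖ * ‖c‖ := by
    rw [← CStarRing.norm_star_mul_self, h1, CStarRing.norm_star_mul_self]
  exact (mul_self_inj_of_nonneg (norm_nonneg _) (norm_nonneg _)).mp h2

lemma norm_mul_cfcₙ_le (a : A) {φ : ℝ → ℝ} (hφ : Continuous φ) (hφ0 : φ 0 = 0)
    {M : ℝ} (hM : 0 ≤ M) (hbd : ∀ t ∈ σₙ ℝ (cstarAbs a), |t * φ t| ≤ M) :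
    ‖a * cfcₙ φ (cstarAbs a)‖ ≤ M := by
  set b := cstarAbs a with hbdef
  have hb : IsSelfAdjoint b := cstarAbs_sa a
  set c := cfcₙ φ b with hcdef
  have hcsa : IsSelfAdjoint c := cfcₙ_predicate φ b
  have h1 : star (a * c) * (a * c) = cfcₙ (fun t => φ t * (t * (t * φ t))) b := by
    have e1 : cfcₙ (fun t => φ t * (t * (t * φ t))) b = c * (b * (b * c)) := by
      rw [cfcₙ_mul φ (fun s => s * (s * φ s)) b hφ.continuousOn hφ0
        (continuous_id.mul (continuous_id.mul hφ)).continuousOn (by simp [hφ0])]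
      rw [cfcₙ_mul_id_left b hb (fun s => s * φ s)
        (continuous_id.mul hφ).continuousOn (by simp [hφ0])]
      rw [cfcₙ_mul_id_left b hb φ hφ.continuousOn hφ0]
    rw [e1, star_mul, hcsa.star_eq, show c * star a * (a * c) = c * ((star a * a) * c) by
      simp only [mul_assoc], ← cstarAbs_mul_self a, ← hbdef]
    simp only [mul_assoc]
  have h2 : ‖a * c‖ * ‖a * c‖ ≤ M * M := by
    rw [← CStarRing.norm_star_mul_self, h1]
    apply norm_cfcₙ_le
    intro t ht
    have : φ t * (t * (t * φ t)) = (t * φ t) * (t * φ t) := by ring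
    rw [Real.norm_eq_abs, this, abs_mul]
    exact mul_le_mul (hbd t ht) (hbd t ht) (abs_nonneg _) hM
  nlinarith [norm_nonneg (a * c)]

/-- the key lower bound `ε ‖u y‖ ≤ ‖a y‖`. -/
lemma crEps_mul_norm_le (a : A) (hcr : HasClosedRange a) (y : A) :
    crEps a * ‖polarIso a * y‖ ≤ ‖a * y‖ := by
  set ε := crEps a
  have hε := crEps_pos a
  set b := cstarAbs a with hbdef
  have hb : IsSelfAdjoint b := cstarAbs_sa a
  -- work in the unitization
  set Y : A⁺¹ := (y : A⁺¹) with hYdef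
  set D1 : A⁺¹ := cfc (fun t : ℝ => ε ^ 2 * kFun ε t) (b : A⁺¹) with hD1def
  set D2 : A⁺¹ := cfc (fun t : ℝ => t * t) (b : A⁺¹) with hD2def
  have hspec : spectrum ℝ ((b : A⁺¹)) = σₙ ℝ b :=
    (Unitization.quasispectrum_eq_spectrum_inr' ℝ ℂ b).symm
  have h0 : (0 : A⁺¹) ≤ D1 := by
    rw [hD1def]
    apply cfc_nonneg
    intro x hx
    rw [hspec] at hx
    rcases spec_dichotomy hcr hx with h0 | hge
    · simp [h0]
    · rw [kFun_large hε hge]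
      positivity
  have h12 : D1 ≤ D2 := by
    rw [hD1def, hD2def]
    apply cfc_mono (hf := (continuous_const.mul (continuous_kFun hε)).continuousOn)
      (hg := (continuous_id.mul continuous_id).continuousOn)
    intro x hx
    rw [hspec] at hx
    rcases spec_dichotomy hcr hx with h0 | hge
    · simp [h0]
    · show ε ^ 2 * kFun ε x ≤ x * x
      rw [kFun_large hε hge, mul_one]
      show ε ^ 2 ≤ x * x
      nlinarith
  have hc0 : (0 : A⁺¹) ≤ star Y * D1 * Y := star_left_conjugate_nonneg h0 Y
  have hc12 : star Y * D1 * Y ≤ star Y * D2 * Y := star_left_conjugate_le_conjugate h12 Y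
  have hn : ‖star Y * D1 * Y‖ ≤ ‖star Y * D2 * Y‖ :=
    CStarAlgebra.norm_le_norm_of_nonneg_of_le hc0 hc12
  -- identify the two sides
  have hD1' : D1 = ((ε ^ 2 • cfcₙ (kFun ε) b : A) : A⁺¹) := by
    rw [hD1def, ← Unitization.real_cfcₙ_eq_cfc_inr b _ (by simp),
      cfcₙ_const_mul (ε ^ 2) (kFun ε) b (continuous_kFun hε).continuousOn (by simp)]
  have hD2' : D2 = ((star a * a : A) : A⁺¹) := by
    rw [hD2def, ← Unitization.real_cfcₙ_eq_cfc_inr b _ (by simp), cfcₙ_sq a]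
  have hww : star (polarIso a * y) * (polarIso a * y) = star y * cfcₙ (kFun ε) b * y := by
    rw [star_mul, show star y * star (polarIso a) * (polarIso a * y)
      = star y * (star (polarIso a) * polarIso a) * y by simp only [mul_assoc],
      polarIso_star_mul_self a]
  have haa : star (a * y) * (a * y) = star y * (star a * a) * y := by
    rw [star_mul]; simp only [mul_assoc]
  have key1 : star Y * D1 * Y
      = ((ε ^ 2 • (star (polarIso a * y) * (polarIso a * y)) : A) : A⁺¹) := by
    rw [hD1', hYdef, hww, Unitization.inr_smul, Unitization.inr_smul,
      mul_smul_comm, smul_mul_assoc]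
    congr 1
    simp only [Unitization.inr_mul, Unitization.inr_star]
  have key2 : star Y * D2 * Y = ((star (a * y) * (a * y) : A) : A⁺¹) := by
    rw [hD2', hYdef, haa]
    simp only [Unitization.inr_mul, Unitization.inr_star]
  rw [key1, key2, Unitization.norm_inr, Unitization.norm_inr, norm_smul,
    Real.norm_eq_abs, abs_of_nonneg (by positivity : (0:ℝ) ≤ ε ^ 2),
    CStarRing.norm_star_mul_self, CStarRing.norm_star_mul_self] at hn
  nlinarith [norm_nonneg (polarIso a * y), norm_nonneg (a * y),
    mul_nonneg hε.le (norm_nonneg (polarIso a * y))]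

end Basic

/-! ### continuity of `a ↦ cfcₙ ψ (star a * a)` -/

section Continuity

variable {A : Type*} [NonUnitalCStarAlgebra A]

lemma quasi_star_mul_self_nonneg (a : A) {x : ℝ} (hx : x ∈ σₙ ℝ (star a * a)) : 0 ≤ x := by
  rw [Unitization.quasispectrum_eq_spectrum_inr' ℝ ℂ] at hx
  rw [show ((star a * a : A) : A⁺¹) = star (a : A⁺¹) * (a : A⁺¹) by
    rw [Unitization.inr_mul, Unitization.inr_star]] at hx
  exact spectrum_nonneg_of_nonneg (star_mul_self_nonneg _) hx

/-- `b ^ (k+1)` for non-unital algebras. -/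
noncomputable def mpow (b : A) : ℕ → A
  | 0 => b
  | (k + 1) => b * mpow b k

lemma continuous_mpow_star_mul_self (k : ℕ) :
    Continuous fun a : A => mpow (star a * a) k := by
  induction k with
  | zero => exact continuous_star.mul continuous_id
  | succ n ih => exact (continuous_star.mul continuous_id).mul ih

lemma cfcₙ_mpow (b : A) (hb : IsSelfAdjoint b) (k : ℕ) :
    cfcₙ (fun t : ℝ => t ^ (k + 1)) b = mpow b k := by
  induction k with
  | zero =>
    have e : (fun t : ℝ => t ^ (0 + 1)) = fun t : ℝ => t := by funext t; simp
    rw [e]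
    exact cfcₙ_id' ℝ b hb
  | succ n ih =>
    have e1 : cfcₙ (fun t : ℝ => t * t ^ (n + 1)) b = b * mpow b n := by
      rw [cfcₙ_mul (fun t : ℝ => t) (fun t : ℝ => t ^ (n + 1)) b (by fun_prop) rfl
        (by fun_prop) (by simp), cfcₙ_id' ℝ b hb, ih]
    calc cfcₙ (fun t : ℝ => t ^ (n + 2)) b
        = cfcₙ (fun t : ℝ => t * t ^ (n + 1)) b := by
          apply cfcₙ_congr; intro t _; ring
      _ = b * mpow b n := e1
      _ = mpow b (n + 1) := rfl

lemma cfcₙ_polysum (b : A) (hb : IsSelfAdjoint b) (n : ℕ) (c : ℕ → ℝ) :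
    cfcₙ (fun t : ℝ => ∑ k ∈ Finset.range n, c k * t ^ (k + 1)) b
      = ∑ k ∈ Finset.range n, c k • mpow b k := by
  have hfuns : (fun t : ℝ => ∑ k ∈ Finset.range n, c k * t ^ (k + 1))
      = ∑ k ∈ Finset.range n, (fun t : ℝ => c k * t ^ (k + 1)) := by
    funext t; simp
  rw [hfuns, cfcₙ_sum _ b _ (fun i _ => by fun_prop) (fun i _ => by simp)]
  refine Finset.sum_congr rfl fun k _ => ?_
  rw [cfcₙ_const_mul (c k) (fun t : ℝ => t ^ (k + 1)) b (by fun_prop) (by simp),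
    cfcₙ_mpow b hb k]

lemma continuous_cfcₙ_star_mul_self {ψ : ℝ → ℝ} (hψ : Continuous ψ) (hψ0 : ψ 0 = 0) :
    Continuous fun a : A => cfcₙ ψ (star a * a) := by
  rw [continuous_iff_continuousAt]
  intro a₀
  rw [Metric.continuousAt_iff]
  intro ε hε
  set M : ℝ := (‖a₀‖ + 1) ^ 2 with hM
  have hM0 : 0 ≤ M := by positivity
  obtain ⟨p, hp⟩ := exists_polynomial_near_of_continuousOn 0 M ψ hψ.continuousOn (ε / 6)
    (by positivity)
  set q : Polynomial ℝ := p - Polynomial.C (Polynomial.eval 0 p) with hq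
  have hq0 : q.eval 0 = 0 := by simp [hq]
  have hqc : Continuous fun t : ℝ => q.eval t := q.continuous
  have hqapprox : ∀ x ∈ Set.Icc (0:ℝ) M, |ψ x - q.eval x| ≤ ε / 3 := by
    intro x hx
    have h1 := hp x hx
    have h2 := hp 0 ⟨le_refl 0, hM0⟩
    rw [hψ0, sub_zero] at h2
    have e : ψ x - q.eval x = -(p.eval x - ψ x) + p.eval 0 := by
      simp only [hq, Polynomial.eval_sub, Polynomial.eval_C]; ring
    calc |ψ x - q.eval x| ≤ |-(p.eval x - ψ x)| + |p.eval 0| := e ▸ abs_add_le _ _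
      _ = |p.eval x - ψ x| + |p.eval 0| := by rw [abs_neg]
      _ ≤ ε / 3 := by linarith
  set n := q.natDegree with hn
  set E : A → A := fun a => ∑ k ∈ Finset.range n, q.coeff (k + 1) • mpow (star a * a) k
    with hE
  have hqfun : (fun t : ℝ => q.eval t)
      = fun t => ∑ k ∈ Finset.range n, q.coeff (k + 1) * t ^ (k + 1) := by
    funext t
    rw [Polynomial.eval_eq_sum_range, Finset.sum_range_succ']
    have hc0 : q.coeff 0 = 0 := by
      rw [Polynomial.coeff_zero_eq_eval_zero]; exact hq0
    simp [hc0]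
    rfl
  have hEq : ∀ a : A, E a = cfcₙ (fun t : ℝ => q.eval t) (star a * a) := by
    intro a
    rw [hqfun, cfcₙ_polysum (star a * a) (star_mul_self_sa a) n (fun k => q.coeff (k + 1))]
  have hEc : Continuous E := by
    apply continuous_finset_sum
    intro k _
    exact (continuous_mpow_star_mul_self k).const_smul _
  obtain ⟨δ₂, hδ₂pos, hδ₂⟩ := Metric.continuousAt_iff.mp (hEc.continuousAt (x := a₀)) (ε / 3)
    (by positivity)
  refine ⟨min 1 δ₂, by positivity, ?_⟩
  intro a ha
  rw [dist_eq_norm] at ha ⊢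
  have hnear : ∀ a' : A, ‖a' - a₀‖ ≤ 1 → ‖cfcₙ ψ (star a' * a') - E a'‖ ≤ ε / 3 := by
    intro a' ha'
    have hsa : IsSelfAdjoint (star a' * a') := star_mul_self_sa a'
    have hspecsub : σₙ ℝ (star a' * a') ⊆ Set.Icc 0 M := by
      intro x hx
      refine ⟨quasi_star_mul_self_nonneg a' hx, ?_⟩
      have h1 := quasispectrum_abs_le_norm (star a' * a') hx
      have h2 : ‖star a' * a'‖ = ‖a'‖ * ‖a'‖ := CStarRing.norm_star_mul_self
      have h3 : ‖a'‖ ≤ ‖a₀‖ + 1 := by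
        calc ‖a'‖ = ‖a₀ + (a' - a₀)‖ := by congr 1; abel
          _ ≤ ‖a₀‖ + ‖a' - a₀‖ := norm_add_le _ _
          _ ≤ ‖a₀‖ + 1 := by linarith
      have h4 : x ≤ |x| := le_abs_self x
      rw [hM]
      nlinarith [norm_nonneg a', norm_nonneg a₀]
    rw [hEq a', ← cfcₙ_sub ψ (fun t : ℝ => q.eval t) (star a' * a') hψ.continuousOn hψ0
      hqc.continuousOn hq0]
    apply norm_cfcₙ_le
    intro x hx
    rw [Real.norm_eq_abs]
    exact hqapprox x (hspecsub hx)
  have hb1 : ‖a - a₀‖ ≤ 1 := le_trans ha.le (min_le_left _ _)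
  have hb2 : ‖a - a₀‖ < δ₂ := lt_of_lt_of_le ha (min_le_right _ _)
  have hE12 : ‖E a - E a₀‖ < ε / 3 := by
    have := hδ₂ (show dist a a₀ < δ₂ by rwa [dist_eq_norm])
    rwa [dist_eq_norm] at this
  calc ‖cfcₙ ψ (star a * a) - cfcₙ ψ (star a₀ * a₀)‖
      = ‖(cfcₙ ψ (star a * a) - E a) + (E a - E a₀) + (E a₀ - cfcₙ ψ (star a₀ * a₀))‖ := by
        congr 1; abel
    _ ≤ ‖(cfcₙ ψ (star a * a) - E a) + (E a - E a₀)‖ + ‖E a₀ - cfcₙ ψ (star a₀ * a₀)‖ :=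
        norm_add_le _ _
    _ ≤ ‖cfcₙ ψ (star a * a) - E a‖ + ‖E a - E a₀‖ + ‖E a₀ - cfcₙ ψ (star a₀ * a₀)‖ := by
        have := norm_add_le (cfcₙ ψ (star a * a) - E a) (E a - E a₀)
        linarith
    _ < ε := by
        have h1 := hnear a hb1
        have h2 := hnear a₀ (by simp)
        rw [norm_sub_rev] at h2
        linarith

end Continuity

/-! ### gap representation -/

section Gap

variable {A : Type*} [NonUnitalCStarAlgebra A]

lemma polarIso_eq_of_gap (a : A) (hcr : HasClosedRange a) {δ : ℝ} (hδ : 0 < δ)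
    (hgap : ∀ t ∈ σₙ ℝ (cstarAbs a), t ∉ Set.Ioo 0 δ) :
    polarIso a = a * cfcₙ (fun s : ℝ => gFun δ (Real.sqrt s)) (star a * a) := by
  rw [polarIso_eq]
  congr 1
  have h1 : cfcₙ (gFun (crEps a)) (cstarAbs a) = cfcₙ (gFun δ) (cstarAbs a) := by
    apply cfcₙ_congr
    intro t ht
    rcases spec_dichotomy hcr ht with h0 | hge
    · simp [h0]
    · have hpos : 0 < t := lt_of_lt_of_le (crEps_pos a) hge
      have htδ : δ ≤ t := le_of_not_gt fun hlt => hgap t ht ⟨hpos, hlt⟩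
      rw [gFun_large (crEps_pos a) hge, gFun_large hδ htδ]
  rw [h1, cstarAbs, ← cfcₙ_comp (gFun δ) Real.sqrt (star a * a)
    (continuous_gFun hδ).continuousOn (by simp) Real.continuous_sqrt.continuousOn (by simp)
    (star_mul_self_sa a)]
  rfl

/-! ### the key lemma: a continuity point has a uniform spectral gap nearby -/

lemma exists_gap_nhds {X : Type*} [TopologicalSpace X] (f : X → A) (hf : Continuous f)
    (hcr : ∀ x, HasClosedRange (f x)) (u : X → A) (hu : ∀ x, u x = polarIso (f x))
    {x₀ : X} (hc : ContinuousAt u x₀) :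
    ∃ δ > 0, ∀ᶠ x in nhds x₀, ∀ t ∈ σₙ ℝ (cstarAbs (f x)), t ∉ Set.Ioo 0 δ := by
  set ε₀ := crEps (f x₀) with hε₀
  have hε₀pos := crEps_pos (f x₀)
  set η := min (ε₀ / 16) (1 / 16 : ℝ) with hη
  have hηpos : 0 < η := by positivity
  have hη1 : η ≤ ε₀ / 16 := min_le_left _ _
  have hη2 : η ≤ 1 / 16 := min_le_right _ _
  have h1 : ∀ᶠ x in nhds x₀, ‖f x - f x₀‖ < η := by
    have := Metric.tendsto_nhds.mp (hf.continuousAt (x := x₀)) η hηpos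
    simpa [dist_eq_norm] using this
  have h2 : ∀ᶠ x in nhds x₀, ‖u x - u x₀‖ < η := by
    have := Metric.tendsto_nhds.mp hc η hηpos
    simpa [dist_eq_norm] using this
  refine ⟨ε₀ / 2, by positivity, ?_⟩
  filter_upwards [h1, h2] with x hx1 hx2
  intro t ht htIoo
  obtain ⟨htpos, htlt⟩ := htIoo
  set φ : ℝ → ℝ := fun s => max 0 (1 - |s - t| / (t / 2)) with hφdef
  have hφc : Continuous φ :=
    continuous_const.max (continuous_const.sub
      ((continuous_abs.comp (continuous_id.sub continuous_const)).div_const _))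
  have hφ0 : φ 0 = 0 := by
    have e1 : |0 - t| = t := by rw [zero_sub, abs_neg, abs_of_pos htpos]
    have e2 : t / (t / 2) = 2 := by field_simp
    simp only [hφdef, e1]
    rw [e2]
    norm_num
  have hφt : φ t = 1 := by simp [hφdef]
  have hφnn : ∀ s, 0 ≤ φ s := fun s => le_max_left _ _
  have hφle1 : ∀ s, φ s ≤ 1 := by
    intro s
    apply max_le (by norm_num)
    have h3 : 0 ≤ |s - t| / (t / 2) := by positivity
    linarith
  have hsupp : ∀ s, 0 ≤ s → |s * φ s| ≤ 3 * t / 2 := by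
    intro s hs
    rcases le_or_gt (φ s) 0 with h | h
    · have h0 : φ s = 0 := le_antisymm h (hφnn s)
      rw [h0, mul_zero, abs_zero]
      positivity
    · have hx : 0 < 1 - |s - t| / (t / 2) := by
        by_contra hcon
        push_neg at hcon
        have hzero : φ s = 0 := by
          simp only [hφdef]
          exact max_eq_left hcon
        rw [hzero] at h
        exact lt_irrefl 0 h
      have ht2 : (0:ℝ) < t / 2 := by positivity
      have habs : |s - t| < t / 2 := (div_lt_one ht2).mp (by linarith)
      have hsle : s ≤ 3 * t / 2 := by
        have := abs_lt.mp habs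
        linarith [this.2]
      rw [abs_of_nonneg (mul_nonneg hs (hφnn s))]
      calc s * φ s ≤ s * 1 := mul_le_mul_of_nonneg_left (hφle1 s) hs
        _ = s := mul_one s
        _ ≤ 3 * t / 2 := hsle
  set c := cfcₙ φ (cstarAbs (f x)) with hc_def
  have hcle : ‖c‖ ≤ 1 := norm_cfcₙ_le fun s _ => by
    rw [Real.norm_eq_abs, abs_of_nonneg (hφnn s)]; exact hφle1 s
  have hcge : (1:ℝ) ≤ ‖c‖ := by
    have := norm_apply_le_norm_cfcₙ φ (cstarAbs (f x)) ht hφc.continuousOn hφ0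
      (cstarAbs_sa (f x))
    rwa [hφt, Real.norm_eq_abs, abs_one] at this
  have hceq : ‖c‖ = 1 := le_antisymm hcle hcge
  have huc : ‖u x * c‖ = 1 := by
    rw [hu x]
    exact (norm_polarIso_mul_cfcₙ (f x) (hcr x) hφc hφ0).trans hceq
  have hfxc : ‖f x * c‖ ≤ 3 * ε₀ / 4 := by
    apply norm_mul_cfcₙ_le (f x) hφc hφ0 (by positivity)
    intro s hs
    exact le_trans (hsupp s (quasi_abs_nonneg hs)) (by linarith)
  have hfx0c : ‖f x₀ * c‖ ≤ 3 * ε₀ / 4 + η := by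
    have e : f x * c + (f x₀ - f x) * c = f x₀ * c := by noncomm_ring
    calc ‖f x₀ * c‖ = ‖f x * c + (f x₀ - f x) * c‖ := by rw [e]
      _ ≤ ‖f x * c‖ + ‖(f x₀ - f x) * c‖ := norm_add_le _ _
      _ ≤ ‖f x * c‖ + ‖f x₀ - f x‖ * ‖c‖ := by
          have := norm_mul_le (f x₀ - f x) c
          linarith
      _ ≤ 3 * ε₀ / 4 + η := by
          rw [hceq, mul_one, norm_sub_rev]
          linarith
  have hux0c : ε₀ * ‖u x₀ * c‖ ≤ 3 * ε₀ / 4 + η := by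
    rw [hu x₀]
    exact le_trans (crEps_mul_norm_le (f x₀) (hcr x₀) c) hfx0c
  have h6 : ‖u x * c‖ ≤ ‖(u x - u x₀) * c‖ + ‖u x₀ * c‖ := by
    have e : (u x - u x₀) * c + u x₀ * c = u x * c := by noncomm_ring
    calc ‖u x * c‖ = ‖(u x - u x₀) * c + u x₀ * c‖ := by rw [e]
      _ ≤ _ := norm_add_le _ _
  have h7 : ‖(u x - u x₀) * c‖ ≤ η := by
    have := norm_mul_le (u x - u x₀) c
    rw [hceq] at this
    simp only [mul_one] at this
    linarith
  have h8 : ε₀ * ‖u x₀ * c‖ ≥ ε₀ * (1 - η) := by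
    have : 1 - η ≤ ‖u x₀ * c‖ := by
      rw [huc] at h6
      linarith
    nlinarith
  nlinarith [hε₀pos, hηpos]

end Gap

end PolarAux



/-- **Corollary 3.** If `f : X → A` is a continuous function from a topological
space into a C*-algebra such that `f x` has closed range for each `x`, and
`u x = 𝐮 (f x)`, then the set of continuity points of `u` is open. -/
theorem isOpen_continuousAt_polarIso
    {X : Type*} [TopologicalSpace X] {A : Type*} [NonUnitalCStarAlgebra A]
    (f : X → A) (hf : Continuous f) (hcr : ∀ x, HasClosedRange (f x))
    (u : X → A) (hu : ∀ x, u x = polarIso (f x)) :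
    IsOpen {x : X | ContinuousAt u x} := by
  rw [isOpen_iff_mem_nhds]
  intro x₀ hx₀
  obtain ⟨δ, hδpos, hev⟩ := PolarAux.exists_gap_nhds f hf hcr u hu hx₀
  have hψc : Continuous fun s : ℝ => PolarAux.gFun δ (Real.sqrt s) :=
    (PolarAux.continuous_gFun hδpos).comp Real.continuous_sqrt
  have hF : Continuous fun x : X =>
      f x * cfcₙ (fun s : ℝ => PolarAux.gFun δ (Real.sqrt s)) (star (f x) * f x) :=
    hf.mul ((PolarAux.continuous_cfcₙ_star_mul_self hψc (by simp)).comp hf)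
  have hfin : ∀ᶠ x in nhds x₀, ContinuousAt u x := by
    filter_upwards [hev.eventually_nhds] with x hx
    have heq : u =ᶠ[nhds x] fun y =>
        f y * cfcₙ (fun s : ℝ => PolarAux.gFun δ (Real.sqrt s)) (star (f y) * f y) :=
      hx.mono fun y hy => by
        rw [hu y, PolarAux.polarIso_eq_of_gap (f y) (hcr y) hδpos hy]
    exact hF.continuousAt.congr heq.symm
  exact hfin
end

section
/- Let H be a complex Hilbert space and let u, v ∈ B(H) be bounded operators such that u is a proper isometry (u*u = 1 and uu* ≠ 1) and v is a proper co-isometry (vv* = 1 and v*v ≠ 1). Then ‖u − v‖ = 2. -/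
set_option maxHeartbeats 1000000

open ContinuousLinearMap

open scoped InnerProductSpace in
/-- If `u` is a proper isometry and `v` a proper co-isometry on a complex
Hilbert space `H`, then `‖u − v‖ = 2`. -/
theorem norm_sub_eq_two_of_proper_isometry_proper_coisometry
    {H : Type*} [NormedAddCommGroup H] [InnerProductSpace ℂ H] [CompleteSpace H]
    (u v : H →L[ℂ] H)
    (hu : adjoint u * u = 1) (hu' : u * adjoint u ≠ 1)
    (hv : v * adjoint v = 1) (hv' : adjoint v * v ≠ 1) :
    ‖u - v‖ = 2 := by
  have hneg : ∀ k : ℕ, ((-1 : ℂ) ^ k) * ((-1) ^ k) = 1 := by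
    intro k
    rw [← pow_add, ← two_mul, pow_mul]
    norm_num
  -- `u` and `adjoint v` are isometric
  have huiso : ∀ w : H, ‖u w‖ = ‖w‖ := by
    intro w
    have h1 : ⟪u w, u w⟫_ℂ = ⟪w, w⟫_ℂ := by
      have h2 := adjoint_inner_left u w (u w)
      have h3 : (adjoint u * u) w = w := by rw [hu]; rfl
      rw [mul_apply_eq_comp] at h3
      rw [← h2, h3]
    have h2 : ‖u w‖ ^ 2 = ‖w‖ ^ 2 := by
      rw [← inner_self_eq_norm_sq (𝕜 := ℂ), ← inner_self_eq_norm_sq (𝕜 := ℂ), h1]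
    nlinarith [norm_nonneg (u w), norm_nonneg w]
  have hviso : ∀ w : H, ‖adjoint v w‖ = ‖w‖ := by
    intro w
    have h1 : ⟪adjoint v w, adjoint v w⟫_ℂ = ⟪w, w⟫_ℂ := by
      have h2 := adjoint_inner_left v (adjoint v w) w
      have h3 : (v * adjoint v) w = w := by rw [hv]; rfl
      rw [mul_apply_eq_comp] at h3
      rw [h2, h3]
    have h2 : ‖adjoint v w‖ ^ 2 = ‖w‖ ^ 2 := by
      rw [← inner_self_eq_norm_sq (𝕜 := ℂ), ← inner_self_eq_norm_sq (𝕜 := ℂ), h1]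
    nlinarith [norm_nonneg (adjoint v w), norm_nonneg w]
  have hunorm : ‖u‖ ≤ 1 := opNorm_le_bound u zero_le_one (fun w => by rw [huiso, one_mul])
  have hvnorm : ‖v‖ ≤ 1 := by
    have h1 : ‖adjoint v‖ ≤ 1 :=
      opNorm_le_bound _ zero_le_one (fun w => by rw [hviso, one_mul])
    calc ‖v‖ = ‖star v‖ := (norm_star v).symm
      _ = ‖adjoint v‖ := by rw [star_eq_adjoint]
      _ ≤ 1 := h1
  -- a unit vector in the kernel of v
  obtain ⟨x, hx1, hx0⟩ : ∃ x : H, ‖x‖ = 1 ∧ v x = 0 := by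
    have hy : ∃ y : H, (adjoint v * v) y ≠ y := by
      by_contra h
      push_neg at h
      exact hv' (ContinuousLinearMap.ext fun y => by simpa using h y)
    obtain ⟨y, hy⟩ := hy
    set z := y - (adjoint v * v) y with hz
    have hzne : z ≠ 0 := sub_ne_zero.mpr (Ne.symm hy)
    have hvz : v z = 0 := by
      simp only [hz, map_sub, mul_apply_eq_comp]
      have h3 : v (adjoint v (v y)) = (v * adjoint v) (v y) := rfl
      rw [h3, hv]
      simp
    refine ⟨‖z‖⁻¹ • z, ?_, by simp [hvz]⟩
    rw [norm_smul]
    simp [norm_ne_zero_iff.mpr hzne]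
  set T : H →L[ℂ] H := adjoint v * u with hTdef
  set P : H →L[ℂ] H := adjoint v * v with hPdef
  have hTinner : ∀ a b : H, ⟪T a, T b⟫_ℂ = ⟪a, b⟫_ℂ := by
    intro a b
    have hadj : adjoint T = adjoint u * v := by
      rw [hTdef, ← star_eq_adjoint, star_mul, star_eq_adjoint, star_eq_adjoint,
        adjoint_adjoint]
    have hT1 : adjoint T * T = 1 := by
      rw [hadj, hTdef]
      calc adjoint u * v * (adjoint v * u) = adjoint u * (v * adjoint v) * u := by
            rw [mul_assoc, mul_assoc, mul_assoc]
        _ = 1 := by rw [hv, mul_one, hu]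
    have h1 : ⟪(adjoint T * T) a, b⟫_ℂ = ⟪T a, T b⟫_ℂ := by
      rw [mul_apply_eq_comp]
      exact adjoint_inner_left T b (T a)
    rw [← h1, hT1, one_apply_eq_self]
  have hPT : P * T = T := by
    rw [hPdef, hTdef]
    calc adjoint v * v * (adjoint v * u) = adjoint v * (v * adjoint v) * u := by
          rw [mul_assoc, mul_assoc, mul_assoc]
      _ = adjoint v * u := by rw [hv, mul_one]
  set e : ℕ → H := fun j => (T ^ j) x with he
  have he0 : e 0 = x := by simp [he]
  have heS : ∀ j, e (j + 1) = T (e j) := by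
    intro j
    simp only [he, pow_succ', mul_apply_eq_comp]
  have hPe : ∀ j, P (e (j + 1)) = e (j + 1) := by
    intro j
    rw [heS]
    have h1 : P (T (e j)) = (P * T) (e j) := rfl
    rw [h1, hPT]
  have hPx : P x = 0 := by
    rw [hPdef, mul_apply_eq_comp, hx0, map_zero]
  have hxe : ∀ m, ⟪x, e (m + 1)⟫_ℂ = 0 := by
    intro m
    have h1 : ⟪x, adjoint v (v (e (m + 1)))⟫_ℂ = 0 := by
      rw [adjoint_inner_right v x (v (e (m + 1))), hx0, inner_zero_left]
    calc ⟪x, e (m + 1)⟫_ℂ = ⟪x, P (e (m + 1))⟫_ℂ := by rw [hPe m]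
      _ = 0 := h1
  have inner_e : ∀ j k, ⟪e j, e k⟫_ℂ = if j = k then 1 else 0 := by
    intro j
    induction j with
    | zero =>
      intro k
      cases k with
      | zero =>
        rw [he0, inner_self_eq_norm_sq_to_K, hx1]
        norm_num
      | succ k =>
        rw [he0, hxe k]
        simp
    | succ j ih =>
      intro k
      cases k with
      | zero =>
        rw [he0, ← inner_conj_symm, hxe j]
        simp
      | succ k =>
        rw [heS, heS, hTinner, ih k]
        simp only [Nat.succ_inj]
  -- the key estimate
  have key : ∀ n : ℕ, 2 * ((n : ℝ) + 1) - 1 ≤ ‖u - v‖ * ((n : ℝ) + 1) := by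
    intro n
    set m := n + 1 with hm
    set c : ℕ → ℂ := fun k => (-1 : ℂ) ^ k with hc
    have hconj : ∀ k, (starRingEnd ℂ) (c k) = c k := by
      intro k
      simp [hc]
    set ξ : H := ∑ k ∈ Finset.range m, c k • e k with hξ
    set ζ : H := ∑ j ∈ Finset.range m, c j • e (j + 1) with hζ
    have hζζ : ⟪ζ, ζ⟫_ℂ = (m : ℂ) := by
      rw [hζ, sum_inner]
      have h1 : ∀ j ∈ Finset.range m,
          ⟪c j • e (j + 1), ∑ i ∈ Finset.range m, c i • e (i + 1)⟫_ℂ = 1 := by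
        intro j hj
        rw [inner_sum]
        have h2 : ∀ i ∈ Finset.range m, ⟪c j • e (j + 1), c i • e (i + 1)⟫_ℂ =
            if i = j then 1 else 0 := by
          intro i _
          rw [inner_smul_left, inner_smul_right, inner_e, hconj]
          by_cases h : i = j
          · subst h
            simp [hc, hneg i]
          · have hne : j + 1 ≠ i + 1 := fun hh => h (Nat.succ_injective hh).symm
            simp [h, hne, Ne.symm h]
        rw [Finset.sum_congr rfl h2, Finset.sum_ite_eq', if_pos hj]
      rw [Finset.sum_congr rfl h1]
      simp
    have hξξ : ⟪ξ, ξ⟫_ℂ = (m : ℂ) := by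
      rw [hξ, sum_inner]
      have h1 : ∀ j ∈ Finset.range m,
          ⟪c j • e j, ∑ i ∈ Finset.range m, c i • e i⟫_ℂ = 1 := by
        intro j hj
        rw [inner_sum]
        have h2 : ∀ i ∈ Finset.range m, ⟪c j • e j, c i • e i⟫_ℂ =
            if i = j then 1 else 0 := by
          intro i _
          rw [inner_smul_left, inner_smul_right, inner_e, hconj]
          by_cases h : i = j
          · subst h
            simp [hc, hneg i]
          · have hne : j ≠ i := fun hh => h hh.symm
            simp [h, hne]
        rw [Finset.sum_congr rfl h2, Finset.sum_ite_eq', if_pos hj]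
      rw [Finset.sum_congr rfl h1]
      simp
    have hTξ : T ξ = ζ := by
      rw [hξ, hζ, map_sum]
      refine Finset.sum_congr rfl fun k _ => ?_
      rw [map_smul, ← heS]
    have hPξζ : ⟪P ξ, ζ⟫_ℂ = (1 : ℂ) - (m : ℂ) := by
      rw [hξ, map_sum]
      have h1 : ∀ k ∈ Finset.range m, P (c k • e k) =
          if k = 0 then 0 else c k • e k := by
        intro k _
        cases k with
        | zero => simp [map_smul, he0, hPx]
        | succ k => simp [map_smul, hPe k]
      rw [Finset.sum_congr rfl h1, sum_inner]
      have h2 : ∀ k ∈ Finset.range m,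
          ⟪if k = 0 then (0 : H) else c k • e k, ζ⟫_ℂ =
          if k = 0 then 0 else -1 := by
        intro k hk
        cases k with
        | zero => simp
        | succ k =>
          simp only [Nat.succ_ne_zero, if_false]
          rw [hζ, inner_sum]
          have h3 : ∀ i ∈ Finset.range m,
              ⟪c (k + 1) • e (k + 1), c i • e (i + 1)⟫_ℂ =
              if i = k then -1 else 0 := by
            intro i _
            rw [inner_smul_left, inner_smul_right, inner_e, hconj]
            by_cases h : i = k
            · subst h
              have hci : c (i + 1) * c i = -1 := by
                simp only [hc, pow_succ]
                calc (-1 : ℂ) ^ i * -1 * (-1) ^ i = -((-1 : ℂ) ^ i * (-1) ^ i) := by ring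
                  _ = -1 := by rw [hneg i]
              simp [hci]
            · have hne : k + 1 ≠ i + 1 := fun hh => h (Nat.succ_injective hh).symm
              simp [h, hne, Ne.symm h]
          rw [Finset.sum_congr rfl h3, Finset.sum_ite_eq', if_pos]
          simp only [Finset.mem_range] at hk ⊢
          omega
      rw [Finset.sum_congr rfl h2]
      have h4 : ∀ k ∈ Finset.range m, (if k = 0 then (0 : ℂ) else -1) =
          -1 + (if k = 0 then 1 else 0) := by
        intro k _
        by_cases h : k = 0 <;> simp [h]
      rw [Finset.sum_congr rfl h4, Finset.sum_add_distrib, Finset.sum_const,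
        Finset.sum_ite_eq', if_pos (by simp [hm] : (0 : ℕ) ∈ Finset.range m)]
      simp
      ring
    -- the inner product ⟪(u-v)ξ, vζ⟫ equals 2m - 1
    have hmain : ⟪(u - v) ξ, v ζ⟫_ℂ = 2 * (m : ℂ) - 1 := by
      have h1 : adjoint v ((u - v) ξ) = T ξ - P ξ := by
        rw [sub_apply, map_sub, hTdef, hPdef, mul_apply_eq_comp, mul_apply_eq_comp]
      have h2 : ⟪(u - v) ξ, v ζ⟫_ℂ = ⟪adjoint v ((u - v) ξ), ζ⟫_ℂ :=
        (adjoint_inner_left v ζ ((u - v) ξ)).symm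
      rw [h2, h1, inner_sub_left, hTξ, hζζ, hPξζ]
      ring
    -- norms of the test vectors
    have hξn : ‖ξ‖ ^ 2 = (m : ℝ) := by
      have h := hξξ
      rw [inner_self_eq_norm_sq_to_K] at h
      exact Complex.ofReal_injective (by push_cast at h ⊢; exact h)
    have hζn : ‖ζ‖ ^ 2 = (m : ℝ) := by
      have h := hζζ
      rw [inner_self_eq_norm_sq_to_K] at h
      exact Complex.ofReal_injective (by push_cast at h ⊢; exact h)
    have hbound : (2 * (m : ℝ) - 1) ≤ ‖u - v‖ * (m : ℝ) := by
      have h5 : ‖(⟪(u - v) ξ, v ζ⟫_ℂ)‖ = 2 * (m : ℝ) - 1 := by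
        rw [hmain]
        have : ((2 : ℂ) * (m : ℂ) - 1) = ((2 * (m : ℝ) - 1 : ℝ) : ℂ) := by push_cast; ring
        rw [this, Complex.norm_real, Real.norm_eq_abs, abs_of_nonneg]
        have : (1 : ℝ) ≤ (m : ℝ) := by exact_mod_cast Nat.one_le_iff_ne_zero.mpr (by omega)
        linarith
      have h6 : ‖(⟪(u - v) ξ, v ζ⟫_ℂ)‖ ≤ ‖(u - v) ξ‖ * ‖v ζ‖ := norm_inner_le_norm _ _
      have h7 : ‖(u - v) ξ‖ ≤ ‖u - v‖ * ‖ξ‖ := le_opNorm _ _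
      have h8 : ‖v ζ‖ ≤ ‖ζ‖ := by
        calc ‖v ζ‖ ≤ ‖v‖ * ‖ζ‖ := le_opNorm _ _
          _ ≤ 1 * ‖ζ‖ := by
            exact mul_le_mul_of_nonneg_right hvnorm (norm_nonneg _)
          _ = ‖ζ‖ := one_mul _
      have h9 : ‖ξ‖ * ‖ζ‖ ≤ (m : ℝ) := by
        nlinarith [sq_nonneg (‖ξ‖ - ‖ζ‖)]
      have h10 : 0 ≤ ‖u - v‖ := norm_nonneg _
      have h11 : ‖u - v‖ * ‖ξ‖ * ‖ζ‖ ≤ ‖u - v‖ * (m : ℝ) := by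
        rw [mul_assoc]
        exact mul_le_mul_of_nonneg_left h9 h10
      have h12 : ‖(u - v) ξ‖ * ‖v ζ‖ ≤ ‖u - v‖ * ‖ξ‖ * ‖ζ‖ :=
        mul_le_mul h7 h8 (norm_nonneg (v ζ)) (mul_nonneg h10 (norm_nonneg ξ))
      linarith
    have : ((m : ℝ)) = (n : ℝ) + 1 := by push_cast [hm]; ring
    rw [this] at hbound
    exact hbound
  -- conclude
  have hle : ‖u - v‖ ≤ 2 := by
    calc ‖u - v‖ ≤ ‖u‖ + ‖v‖ := norm_sub_le _ _
      _ ≤ 1 + 1 := add_le_add hunorm hvnorm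
      _ = 2 := by norm_num
  have hge : 2 ≤ ‖u - v‖ := by
    by_contra h
    push_neg at h
    obtain ⟨n, hn⟩ := exists_nat_one_div_lt (by linarith : (0 : ℝ) < 2 - ‖u - v‖)
    have h1 := key n
    have h2 : (0 : ℝ) < (n : ℝ) + 1 := by positivity
    have h3 : 2 - 1 / ((n : ℝ) + 1) ≤ ‖u - v‖ := by
      have h4 : (2 * ((n : ℝ) + 1) - 1) / ((n : ℝ) + 1) ≤ ‖u - v‖ := by
        rw [div_le_iff₀ h2]
        linarith
      calc 2 - 1 / ((n : ℝ) + 1) = (2 * ((n : ℝ) + 1) - 1) / ((n : ℝ) + 1) := by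
            field_simp
          _ ≤ ‖u - v‖ := h4
    linarith
  linarith
end

section
/- For every θ ∈ [0, π/2] there exist a complex Hilbert space H and co-isometries u, v ∈ B(H) (i.e., uu* = vv* = 1, so in particular u and v are extremal partial isometries) such that ‖u − v‖ = 2·sin(θ/2) and ‖u*u − v*v‖ = sin θ. Hence the inequality ‖u*u − v*v‖ ≤ d(1 − d²/4)^{1/2} for extremal partial isometries with d = ‖u − v‖ ≤ √2 is sharp. -/
open ContinuousLinearMap Real
open scoped ENNReal ComplexConjugate
noncomputable section
namespace CoisomSharp

local notation "𝓗" => lp (fun _ : ℕ => ℂ) 2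
local notation "⟪" x ", " y "⟫" => @inner ℂ _ _ x y

/-- forward shift on functions -/
def sfun (f : ℕ → ℂ) : ℕ → ℂ
  | 0 => 0
  | n+1 => f n

lemma memℓp_sfun {f : ℕ → ℂ} (hf : Memℓp f 2) : Memℓp (sfun f) 2 := by
  apply memℓp_gen
  have hs : Summable fun n => ‖f n‖ ^ (2:ℝ≥0∞).toReal := hf.summable (by norm_num)
  rw [← summable_nat_add_iff 1]
  exact hs

def Smap : 𝓗 →ₗ[ℂ] 𝓗 where
  toFun x := ⟨sfun x, memℓp_sfun (lp.memℓp x)⟩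
  map_add' x y := by
    apply lp.ext
    funext n
    have : ((x + y : 𝓗) : ℕ → ℂ) = (x : ℕ → ℂ) + (y : ℕ → ℂ) := lp.coeFn_add x y
    cases n with
    | zero => simp [sfun, lp.coeFn_add]; exact (add_zero (0:ℂ)).symm
    | succ m => simp [sfun, this]; rfl
  map_smul' c x := by
    apply lp.ext
    funext n
    have : ((c • x : 𝓗) : ℕ → ℂ) = c • (x : ℕ → ℂ) := lp.coeFn_smul c x
    cases n with
    | zero => simp [sfun, lp.coeFn_smul]
    | succ m => simp [sfun, this]

lemma norm_Smap (x : 𝓗) : ‖Smap x‖ = ‖x‖ := by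
  have h2 : (0:ℝ) < (2:ℝ≥0∞).toReal := by norm_num
  rw [lp.norm_eq_tsum_rpow h2, lp.norm_eq_tsum_rpow h2 x]
  congr 1
  have hsum : Summable fun n => ‖(Smap x) n‖ ^ (2:ℝ≥0∞).toReal :=
    (lp.memℓp (Smap x)).summable h2
  rw [Summable.tsum_eq_zero_add hsum]
  have h0 : ‖(Smap x) 0‖ ^ (2:ℝ≥0∞).toReal = 0 := by
    show ‖sfun x 0‖ ^ (2:ℝ≥0∞).toReal = 0
    simp [sfun]
  rw [h0, zero_add]
  rfl

def S : 𝓗 →L[ℂ] 𝓗 := Smap.mkContinuous 1 (fun x => by rw [norm_Smap, one_mul])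

lemma S_coord (x : 𝓗) (n : ℕ) : (S x) n = sfun x n := rfl

def e (i : ℕ) : 𝓗 := lp.single 2 i 1

lemma e_coord (i n : ℕ) : (e i) n = if n = i then 1 else 0 := by
  simp [e, lp.single_apply, Pi.single_apply]

lemma inner_e (i : ℕ) (x : 𝓗) : ⟪e i, x⟫ = x i := by
  rw [e, lp.inner_single_left]
  rw [RCLike.inner_apply']
  show conj (1:ℂ) * x i = x i
  simp

lemma norm_e (i : ℕ) : ‖e i‖ = 1 := by
  have := lp.norm_single (E := fun _ : ℕ => ℂ) (p := 2) (by norm_num) i (1:ℂ)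
  simpa [e] using this

lemma S_e (n : ℕ) : S (e n) = e (n+1) := by
  apply lp.ext
  funext m
  rw [S_coord]
  cases m with
  | zero => simp [sfun, e_coord]
  | succ k =>
    show (e n) k = (e (n+1)) (k+1)
    simp [e_coord]

def T : 𝓗 →L[ℂ] 𝓗 := adjoint S

lemma T_coord (x : 𝓗) (n : ℕ) : (T x) n = x (n+1) := by
  calc (T x) n = ⟪e n, T x⟫ := (inner_e n (T x)).symm
    _ = ⟪S (e n), x⟫ := adjoint_inner_right S (e n) x
    _ = ⟪e (n+1), x⟫ := by rw [S_e]
    _ = x (n+1) := inner_e _ x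

lemma TS : T * S = 1 := by
  refine ContinuousLinearMap.ext fun x => lp.ext (funext fun n => ?_)
  show ((T * S) x) n = ((1 : 𝓗 →L[ℂ] 𝓗) x) n
  rw [ContinuousLinearMap.mul_apply, ContinuousLinearMap.one_apply, T_coord, S_coord]
  rfl

variable (θ : ℝ)

def w : 𝓗 := (Real.sin θ : ℂ) • e 0 + ((Real.cos θ - 1 : ℝ) : ℂ) • e 1

lemma w_coord (n : ℕ) : (w θ) n =
    (if n = 0 then (Real.sin θ : ℂ) else 0) + (if n = 1 then ((Real.cos θ - 1 : ℝ) : ℂ) else 0) := by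
  have h : ((w θ : 𝓗) : ℕ → ℂ) n
      = ((Real.sin θ : ℂ) • (e 0 : ℕ → ℂ) + ((Real.cos θ - 1 : ℝ) : ℂ) • (e 1 : ℕ → ℂ)) n := by
    rw [w]; rw [lp.coeFn_add, lp.coeFn_smul, lp.coeFn_smul]
  rw [h]
  simp [e_coord]

lemma inner_w (x : 𝓗) : ⟪w θ, x⟫ = (Real.sin θ : ℂ) * x 0 + ((Real.cos θ - 1 : ℝ) : ℂ) * x 1 := by
  rw [w, inner_add_left, inner_smul_left, inner_smul_left, inner_e, inner_e,
    Complex.conj_ofReal, Complex.conj_ofReal]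

def K : 𝓗 →L[ℂ] 𝓗 := (innerSL ℂ (w θ)).smulRight (e 0)

def K' : 𝓗 →L[ℂ] 𝓗 := (innerSL ℂ (e 0)).smulRight (w θ)

lemma K_apply (x : 𝓗) : K θ x = ⟪w θ, x⟫ • e 0 := rfl

lemma K'_apply (x : 𝓗) : K' θ x = x 0 • w θ := by
  show ⟪e 0, x⟫ • w θ = x 0 • w θ
  rw [inner_e]

lemma K_coord (x : 𝓗) (n : ℕ) :
    (K θ x) n = if n = 0 then ⟪w θ, x⟫ else 0 := by
  rw [K_apply]
  have h : ((⟪w θ, x⟫ • e 0 : 𝓗) : ℕ → ℂ) n = ⟪w θ, x⟫ * (e 0 : ℕ → ℂ) n := by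
    rw [lp.coeFn_smul]; rfl
  rw [h, e_coord]
  split <;> simp

lemma K'_coord (x : 𝓗) (n : ℕ) : (K' θ x) n = x 0 * (w θ) n := by
  rw [K'_apply]
  rw [show ((x 0 • w θ : 𝓗) : ℕ → ℂ) n = x 0 * (w θ : ℕ → ℂ) n by rw [lp.coeFn_smul]; rfl]

lemma adjoint_K : adjoint (K θ) = K' θ := by
  symm
  rw [eq_adjoint_iff]
  intro x y
  rw [K'_apply, K_apply, inner_smul_left, inner_smul_right,
    ← inner_conj_symm x (e 0), inner_e]
  ring

def v : 𝓗 →L[ℂ] 𝓗 := T + K θ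

lemma adjoint_T : adjoint T = S := by
  rw [T, adjoint_adjoint]

lemma adjoint_v : adjoint (v θ) = S + K' θ := by
  rw [v, map_add, adjoint_T, adjoint_K]

lemma add_coord (x y : 𝓗) (n : ℕ) : (↑(x + y) : ℕ → ℂ) n = x n + y n := by
  rw [lp.coeFn_add]; rfl

lemma smul_coord (c : ℂ) (x : 𝓗) (n : ℕ) : (↑(c • x) : ℕ → ℂ) n = c * x n := by
  rw [lp.coeFn_smul]; rfl

lemma sub_coord (x y : 𝓗) (n : ℕ) : (↑(x - y) : ℕ → ℂ) n = x n - y n := by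
  rw [lp.coeFn_sub]; rfl

lemma hid : (Real.sin θ : ℂ)^2 + (Real.cos θ : ℂ)^2 = 1 := by
  exact_mod_cast congrArg (fun r : ℝ => (r : ℂ)) (Real.sin_sq_add_cos_sq θ)

lemma vv : v θ * adjoint (v θ) = 1 := by
  refine ContinuousLinearMap.ext fun x => lp.ext (funext fun n => ?_)
  rw [ContinuousLinearMap.mul_apply, adjoint_v]
  cases n with
  | zero =>
    simp only [v, ContinuousLinearMap.add_apply, ContinuousLinearMap.one_apply,
      add_coord, T_coord, K_coord, S_coord, K'_coord, inner_w, w_coord, sfun]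
    norm_num
    simp only [← Complex.ofReal_sin, ← Complex.ofReal_cos]
    linear_combination (x : ℕ → ℂ) 0 * hid θ
  | succ m =>
    simp only [v, ContinuousLinearMap.add_apply, ContinuousLinearMap.one_apply,
      add_coord, T_coord, K_coord, S_coord, K'_coord, inner_w, w_coord, sfun]
    norm_num

def Dop : 𝓗 →L[ℂ] 𝓗 := adjoint T * T - adjoint (v θ) * v θ

lemma D_apply (x : 𝓗) : Dop θ x =
    (-(Real.sin θ:ℂ) * ((Real.sin θ:ℂ) * x 0 + (Real.cos θ:ℂ) * x 1)) • e 0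
  + (-(Real.sin θ:ℂ) * ((Real.cos θ:ℂ) * x 0 - (Real.sin θ:ℂ) * x 1)) • e 1 := by
  apply lp.ext; funext n
  unfold Dop
  rw [adjoint_v, adjoint_T]
  cases n with
  | zero =>
    simp only [v, ContinuousLinearMap.sub_apply, ContinuousLinearMap.mul_apply,
      ContinuousLinearMap.add_apply, sub_coord, add_coord, smul_coord,
      T_coord, K_coord, S_coord, K'_coord, inner_w, w_coord, sfun, e_coord]
    norm_num
    simp only [← Complex.ofReal_sin, ← Complex.ofReal_cos]
    ring
  | succ m =>
    cases m with
    | zero =>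
      simp only [v, ContinuousLinearMap.sub_apply, ContinuousLinearMap.mul_apply,
        ContinuousLinearMap.add_apply, sub_coord, add_coord, smul_coord,
        T_coord, K_coord, S_coord, K'_coord, inner_w, w_coord, sfun, e_coord]
      norm_num
      simp only [← Complex.ofReal_sin, ← Complex.ofReal_cos]
      linear_combination -(x : ℕ → ℂ) 1 * hid θ
    | succ k =>
      simp only [v, ContinuousLinearMap.sub_apply, ContinuousLinearMap.mul_apply,
        ContinuousLinearMap.add_apply, sub_coord, add_coord, smul_coord,
        T_coord, K_coord, S_coord, K'_coord, inner_w, w_coord, sfun, e_coord]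
      norm_num

lemma inner_e0_e1 : ⟪(e 0 : 𝓗), e 1⟫ = 0 := by
  rw [inner_e, e_coord]; norm_num

lemma norm_combo (α β : ℂ) : ‖α • e 0 + β • e 1‖^2 = ‖α‖^2 + ‖β‖^2 := by
  have horth : ⟪(α • e 0 : 𝓗), β • e 1⟫ = 0 := by
    rw [inner_smul_left, inner_smul_right, inner_e0_e1]; ring
  have h := norm_add_sq_eq_norm_sq_add_norm_sq_of_inner_eq_zero (α • e 0) (β • e 1) horth
  have h0 : ‖(α • e 0 : 𝓗)‖ = ‖α‖ := by rw [norm_smul, norm_e, mul_one]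
  have h1 : ‖(β • e 1 : 𝓗)‖ = ‖β‖ := by rw [norm_smul, norm_e, mul_one]
  rw [h0, h1] at h
  nlinarith [h]

lemma coord_sq_le (x : 𝓗) : ‖x 0‖^2 + ‖x 1‖^2 ≤ ‖x‖^2 := by
  have h2 : (0:ℝ) < (2:ℝ≥0∞).toReal := by norm_num
  have h := lp.norm_rpow_eq_tsum h2 x
  have hsum : Summable fun n => ‖x n‖ ^ (2:ℝ≥0∞).toReal := (lp.memℓp x).summable h2
  have hle : ∑ i ∈ ({0,1} : Finset ℕ), ‖x i‖ ^ (2:ℝ≥0∞).toReal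
      ≤ ∑' i, ‖x i‖ ^ (2:ℝ≥0∞).toReal :=
    Summable.sum_le_tsum _ (fun i _ => Real.rpow_nonneg (norm_nonneg _) _) hsum
  rw [← h] at hle
  have ht : (2:ℝ≥0∞).toReal = ((2:ℕ):ℝ) := by norm_num
  simp only [ht, Real.rpow_natCast] at hle
  simpa using hle

lemma norm_D_sq (x : 𝓗) : ‖Dop θ x‖^2 = Real.sin θ ^ 2 * (‖x 0‖^2 + ‖x 1‖^2) := by
  rw [D_apply, norm_combo]
  have key : ∀ a b : ℂ, ‖(Real.sin θ:ℂ) * a + (Real.cos θ:ℂ) * b‖^2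
      + ‖(Real.cos θ:ℂ) * a - (Real.sin θ:ℂ) * b‖^2 = ‖a‖^2 + ‖b‖^2 := by
    intro a b
    simp only [Complex.sq_norm]
    simp only [Complex.normSq_apply, Complex.add_re, Complex.add_im, Complex.sub_re,
      Complex.sub_im, Complex.mul_re, Complex.mul_im, Complex.ofReal_re, Complex.ofReal_im]
    linear_combination (a.re^2 + a.im^2 + b.re^2 + b.im^2) * Real.sin_sq_add_cos_sq θ
  have expand : ∀ c : ℂ, ‖-(Real.sin θ:ℂ) * c‖^2 = Real.sin θ^2 * ‖c‖^2 := by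
    intro c
    rw [norm_mul, mul_pow, norm_neg, Complex.norm_real, Real.norm_eq_abs, sq_abs]
  rw [expand, expand, ← mul_add, key]

lemma norm_D (hθ1 : 0 ≤ θ) (hθ2 : θ ≤ π/2) : ‖Dop θ‖ = Real.sin θ := by
  have hs : 0 ≤ Real.sin θ :=
    Real.sin_nonneg_of_nonneg_of_le_pi hθ1 (le_trans hθ2 (by linarith [Real.pi_pos]))
  apply le_antisymm
  · apply ContinuousLinearMap.opNorm_le_bound _ hs
    intro x
    have h1 := norm_D_sq θ x
    have h2 := coord_sq_le x
    nlinarith [norm_nonneg (Dop θ x), norm_nonneg x, mul_nonneg hs (norm_nonneg x),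
      sq_nonneg (Real.sin θ)]
  · have he : ‖(e 0 : 𝓗)‖ = 1 := norm_e 0
    have h1 : ‖Dop θ (e 0)‖ = Real.sin θ := by
      have hD := norm_D_sq θ (e 0)
      have c0 : (e 0 : 𝓗) 0 = 1 := by rw [e_coord]; norm_num
      have c1 : (e 0 : 𝓗) 1 = 0 := by rw [e_coord]; norm_num
      rw [c0, c1] at hD
      simp only [norm_one, norm_zero, one_pow] at hD
      nlinarith [norm_nonneg (Dop θ (e 0)), hs]
    calc Real.sin θ = ‖Dop θ (e 0)‖ := h1.symm
      _ ≤ ‖Dop θ‖ * ‖e 0‖ := ContinuousLinearMap.le_opNorm _ _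
      _ = ‖Dop θ‖ := by rw [he, mul_one]

lemma norm_w (hθ1 : 0 ≤ θ) (hθ2 : θ ≤ π/2) : ‖w θ‖ = 2 * Real.sin (θ/2) := by
  have hhalf : 0 ≤ Real.sin (θ/2) := by
    apply Real.sin_nonneg_of_nonneg_of_le_pi (by linarith)
    linarith [Real.pi_pos]
  have hsq : Real.sin (θ/2)^2 = 1/2 - Real.cos θ / 2 := by
    have h := Real.sin_sq_eq_half_sub (θ/2)
    rwa [show 2*(θ/2) = θ by ring] at h
  have hwsq : ‖w θ‖^2 = (2 * Real.sin (θ/2))^2 := by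
    rw [w, norm_combo]
    rw [Complex.norm_real, Complex.norm_real, Real.norm_eq_abs, Real.norm_eq_abs,
      sq_abs, sq_abs]
    nlinarith [Real.sin_sq_add_cos_sq θ]
  calc ‖w θ‖ = √(‖w θ‖^2) := by rw [Real.sqrt_sq (norm_nonneg _)]
    _ = √((2 * Real.sin (θ/2))^2) := by rw [hwsq]
    _ = 2 * Real.sin (θ/2) := Real.sqrt_sq (by linarith)

lemma norm_uv (hθ1 : 0 ≤ θ) (hθ2 : θ ≤ π/2) : ‖T - v θ‖ = 2 * Real.sin (θ/2) := by
  have hTv : T - v θ = -(K θ) := by rw [v]; abel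
  rw [hTv, norm_neg, K, ContinuousLinearMap.norm_smulRight_apply, innerSL_apply_norm,
    norm_e, mul_one, norm_w θ hθ1 hθ2]

end CoisomSharp
end

/-- For every `θ ∈ [0, π/2]` there are a complex Hilbert space `H` and
co-isometries `u, v` on `H` with `‖u − v‖ = 2 sin(θ/2)` and
`‖u*u − v*v‖ = sin θ`; hence the inequality of Theorem 7 is sharp. -/
theorem exists_coisometries_norm_sub_eq
    (θ : ℝ) (hθ : θ ∈ Set.Icc 0 (π / 2)) :
    ∃ (H : Type) (_ : NormedAddCommGroup H) (_ : InnerProductSpace ℂ H)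
      (_ : CompleteSpace H) (u v : H →L[ℂ] H),
      u * adjoint u = 1 ∧ v * adjoint v = 1 ∧
      ‖u - v‖ = 2 * Real.sin (θ / 2) ∧
      ‖adjoint u * u - adjoint v * v‖ = Real.sin θ := by
  obtain ⟨hθ1, hθ2⟩ := hθ
  refine ⟨lp (fun _ : ℕ => ℂ) 2, inferInstance, inferInstance, inferInstance,
    CoisomSharp.T, CoisomSharp.v θ, ?_, ?_, ?_, ?_⟩
  · rw [show adjoint CoisomSharp.T = CoisomSharp.S from CoisomSharp.adjoint_T]
    exact CoisomSharp.TS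
  · exact CoisomSharp.vv θ
  · exact CoisomSharp.norm_uv θ hθ1 hθ2
  · exact CoisomSharp.norm_D θ hθ1 hθ2
end
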